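/- arXiv:1106.5010 — 4 statements merged into one kernel-verified Lean document; each statement's English description precedes it below -/
import Mathlib

section
/- Let μ : C → D be a pointed modelization functor between J-categories (μ(0) = 0). Then for any object B of C, TC(μ(B)) ≤ TC(B). -/
open CategoryTheory CategoryTheory.Limits ZeroObject

universe v u v' u'

variable (C : Type u) [Category.{v} C] [HasZeroObject C] [HasZeroMorphisms C]

/-- A category satisfying axioms (J1)-(J4) of Doeraene's J-categories:
a pointed category with fibrations, cofibrations and weak equivalences. -/
structure PreJCat where
  fib : MorphismProperty C
  cofib : MorphismProperty C
  weq : MorphismProperty C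
  /-- (J1) isomorphisms are trivial cofibrations -/
  iso_triv_cofib : ∀ {X Y : C} (f : X ⟶ Y), IsIso f → cofib f ∧ weq f
  /-- (J1) isomorphisms are trivial fibrations -/
  iso_triv_fib : ∀ {X Y : C} (f : X ⟶ Y), IsIso f → fib f ∧ weq f
  fib_comp : ∀ {X Y Z : C} {f : X ⟶ Y} {g : Y ⟶ Z}, fib f → fib g → fib (f ≫ g)
  cofib_comp : ∀ {X Y Z : C} {f : X ⟶ Y} {g : Y ⟶ Z}, cofib f → cofib g → cofib (f ≫ g)
  /-- (J1) two-out-of-three for weak equivalences -/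
  weq_comp : ∀ {X Y Z : C} {f : X ⟶ Y} {g : Y ⟶ Z}, weq f → weq g → weq (f ≫ g)
  weq_of_comp_left : ∀ {X Y Z : C} {f : X ⟶ Y} {g : Y ⟶ Z}, weq g → weq (f ≫ g) → weq f
  weq_of_comp_right : ∀ {X Y Z : C} {f : X ⟶ Y} {g : Y ⟶ Z}, weq f → weq (f ≫ g) → weq g
  /-- (J2) pullbacks of fibrations exist, and the base extension is a fibration -/
  pb_exists : ∀ {E B B' : C} (p : E ⟶ B) (f : B' ⟶ B), fib p →
    ∃ (P : C) (fb : P ⟶ E) (pb : P ⟶ B'), IsPullback fb pb p f ∧ fib pb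
  /-- (J2) base extensions of weak equivalences along fibrations are weak equivalences -/
  pb_weq : ∀ {E B B' P : C} {p : E ⟶ B} {f : B' ⟶ B} {fb : P ⟶ E} {pb : P ⟶ B'},
    fib p → IsPullback fb pb p f → (weq f → weq fb) ∧ (weq p → weq pb)
  /-- (J2) dual: pushouts of cofibrations exist -/
  po_exists : ∀ {A X Y : C} (i : A ⟶ X) (g : A ⟶ Y), cofib i →
    ∃ (Q : C) (inl : X ⟶ Q) (inr : Y ⟶ Q), IsPushout i g inl inr ∧ cofib inr
  po_weq : ∀ {A X Y Q : C} {i : A ⟶ X} {g : A ⟶ Y} {inl : X ⟶ Q} {inr : Y ⟶ Q},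
    cofib i → IsPushout i g inl inr → (weq g → weq inl) ∧ (weq i → weq inr)
  /-- (J3) F-factorizations exist -/
  F_fac : ∀ {X Y : C} (f : X ⟶ Y), ∃ (Z : C) (τ : X ⟶ Z) (q : Z ⟶ Y),
    weq τ ∧ fib q ∧ τ ≫ q = f
  /-- (J3) C-factorizations exist -/
  C_fac : ∀ {X Y : C} (f : X ⟶ Y), ∃ (Z : C) (i : X ⟶ Z) (σ : Z ⟶ Y),
    cofib i ∧ weq σ ∧ i ≫ σ = f
  /-- (J4) cofibrant replacements exist -/
  cof_replace : ∀ X : C, ∃ (Xb : C) (q : Xb ⟶ X), fib q ∧ weq q ∧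
    (∀ {E : C} (p : E ⟶ Xb), fib p → weq p → ∃ s : Xb ⟶ E, s ≫ p = 𝟙 Xb)

variable {C}

namespace PreJCat

/-- An object is a cofibrant model if every trivial fibration onto it admits a section. -/
def CofModel (P : PreJCat C) (X : C) : Prop :=
  ∀ {E : C} (p : E ⟶ X), P.fib p → P.weq p → ∃ s : X ⟶ E, s ≫ p = 𝟙 X

/-- An object is e-fibrant if the morphism to the zero object is a fibration. -/
def EFibrant (P : PreJCat C) (X : C) : Prop := P.fib (0 : X ⟶ 0)

/-- `f` admits a weak lifting along `g` (all objects being cofibrant models). -/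
def WeakLifting (P : PreJCat C) {A B Cc : C} (f : A ⟶ B) (g : Cc ⟶ B) : Prop :=
  ∃ (E : C) (τ : Cc ⟶ E) (q : E ⟶ B), P.weq τ ∧ P.fib q ∧ τ ≫ q = g ∧
    ∃ s : A ⟶ E, s ≫ q = f

/-- `g` admits a weak section. -/
def HasWeakSection (P : PreJCat C) {E B : C} (g : E ⟶ B) : Prop :=
  P.WeakLifting (𝟙 B) g

/-- `j : J ⟶ B` is a join morphism of `f : A ⟶ B` and `g : Cc ⟶ B`: built from an
F-factorization of `g`, a pullback, a C-factorization and a pushout. -/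
def IsJoin (P : PreJCat C) {A Cc B J : C} (f : A ⟶ B) (g : Cc ⟶ B) (j : J ⟶ B) : Prop :=
  ∃ (E : C) (τ : Cc ⟶ E) (q : E ⟶ B), P.weq τ ∧ P.fib q ∧ τ ≫ q = g ∧
  ∃ (E' Z : C) (fbar : E' ⟶ E) (pbar : E' ⟶ A) (i : E' ⟶ Z) (σ : Z ⟶ E)
    (a : A ⟶ J) (bz : Z ⟶ J),
    IsPullback fbar pbar q f ∧ P.cofib i ∧ P.weq σ ∧ i ≫ σ = fbar ∧
    IsPushout pbar i a bz ∧ a ≫ j = f ∧ bz ≫ j = σ ≫ q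

/-- `IsIterJoin P p n h` : `h` is an `n`-th iterated join morphism `*ⁿ_B E ⟶ B` of `p`. -/
inductive IsIterJoin (P : PreJCat C) {E B : C} (p : E ⟶ B) : ℕ → ∀ {X : C}, (X ⟶ B) → Prop
  | zero : IsIterJoin P p 0 p
  | succ {n : ℕ} {X Y : C} {h : X ⟶ B} {h' : Y ⟶ B} :
      IsIterJoin P p n h → P.IsJoin h p h' → IsIterJoin P p (n + 1) h'

/-- The Ganea-type sectional category of a morphism. -/
noncomputable def Gsecat (P : PreJCat C) {E B : C} (p : E ⟶ B) : ℕ∞ :=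
  sInf {n : ℕ∞ | ∃ m : ℕ, n = (m : ℕ∞) ∧
    ∃ (X : C) (h : X ⟶ B), P.IsIterJoin p m h ∧ P.HasWeakSection h}

end PreJCat

/-- `p1, p2` exhibit `Pd` as a binary product of `X` and `Y`. -/
def IsBinProd {X Y Pd : C} (p1 : Pd ⟶ X) (p2 : Pd ⟶ Y) : Prop :=
  Nonempty (IsLimit (BinaryFan.mk p1 p2))

namespace PreJCat

/-- `IsFatWedge P p n j Δ` : `j : Tⁿ(p) ⟶ B^{n+1}` is an `n`-th fat wedge morphism of `p`
together with the diagonal `Δ : B ⟶ B^{n+1}`. -/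
inductive IsFatWedge (P : PreJCat C) {E B : C} (p : E ⟶ B) :
    ℕ → ∀ {T Pw : C}, (T ⟶ Pw) → (B ⟶ Pw) → Prop
  | zero : IsFatWedge P p 0 p (𝟙 B)
  | succ {n : ℕ} {T Pn : C} {j : T ⟶ Pn} {Δ : B ⟶ Pn}
      (hprev : IsFatWedge P p n j Δ)
      {Pn1 : C} {pr1 : Pn1 ⟶ Pn} {pr2 : Pn1 ⟶ B} (hP : IsBinProd pr1 pr2)
      {TB : C} {q1 : TB ⟶ T} {q2 : TB ⟶ B} (hTB : IsBinProd q1 q2)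
      {PE : C} {r1 : PE ⟶ Pn} {r2 : PE ⟶ E} (hPE : IsBinProd r1 r2)
      {jB : TB ⟶ Pn1} (hjB : jB ≫ pr1 = q1 ≫ j ∧ jB ≫ pr2 = q2)
      {pP : PE ⟶ Pn1} (hpP : pP ≫ pr1 = r1 ∧ pP ≫ pr2 = r2 ≫ p)
      {Tn1 : C} {j' : Tn1 ⟶ Pn1} (hjoin : P.IsJoin jB pP j')
      {Δ' : B ⟶ Pn1} (hΔ : Δ' ≫ pr1 = Δ ∧ Δ' ≫ pr2 = 𝟙 B) :
      IsFatWedge P p (n + 1) j' Δ'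

/-- The Whitehead-type sectional category of a morphism with e-fibrant codomain. -/
noncomputable def WsecatE (P : PreJCat C) {E B : C} (p : E ⟶ B) : ℕ∞ :=
  sInf {n : ℕ∞ | ∃ m : ℕ, n = (m : ℕ∞) ∧
    ∃ (T Pw : C) (j : T ⟶ Pw) (Δ : B ⟶ Pw), P.IsFatWedge p m j Δ ∧ P.WeakLifting Δ j}

/-- The Whitehead-type sectional category of an arbitrary morphism, via e-fibrant
replacements of the codomain. -/
noncomputable def Wsecat (P : PreJCat C) {E B : C} (p : E ⟶ B) : ℕ∞ :=
  ⨅ (F : C) (τ : B ⟶ F) (_ : P.weq τ ∧ P.EFibrant F), P.WsecatE (p ≫ τ)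

/-- A commutative square is a homotopy pullback. -/
def IsHPB (P : PreJCat C) {D A Cc B : C} (f' : D ⟶ Cc) (g' : D ⟶ A)
    (g : Cc ⟶ B) (f : A ⟶ B) : Prop :=
  f' ≫ g = g' ≫ f ∧ ∃ (E : C) (τ : Cc ⟶ E) (q : E ⟶ B), P.weq τ ∧ P.fib q ∧ τ ≫ q = g ∧
    ∃ (Pt : C) (pr1 : Pt ⟶ E) (pr2 : Pt ⟶ A), IsPullback pr1 pr2 q f ∧
      ∃ w : D ⟶ Pt, P.weq w ∧ w ≫ pr1 = f' ≫ τ ∧ w ≫ pr2 = g'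

/-- A commutative square is a homotopy pushout. -/
def IsHPO (P : PreJCat C) {A B Cc D : C} (f : A ⟶ B) (g : A ⟶ Cc)
    (i' : B ⟶ D) (j' : Cc ⟶ D) : Prop :=
  f ≫ i' = g ≫ j' ∧ ∃ (Z : C) (i : A ⟶ Z) (σ : Z ⟶ B), P.cofib i ∧ P.weq σ ∧ i ≫ σ = f ∧
    ∃ (Q : C) (inl : Z ⟶ Q) (inr : Cc ⟶ Q), IsPushout i g inl inr ∧
      ∃ w : Q ⟶ D, P.weq w ∧ inl ≫ w = σ ≫ i' ∧ inr ≫ w = j'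

/-- `A-A'-B'-B` is a weak pullback over `b : B ⟶ B'` (all objects cofibrant models). -/
def IsWeakPullback (P : PreJCat C) {A B A' B' : C}
    (f : A ⟶ B) (f' : A' ⟶ B') (b : B ⟶ B') : Prop :=
  ∃ (X : C) (τ : A' ⟶ X) (q : X ⟶ B'), P.weq τ ∧ P.fib q ∧ τ ≫ q = f' ∧
    ∃ x : A ⟶ X, P.IsHPB x f q b

/-- `g : G ⟶ B` is an `n`-th Ganea map of `B`: the `n`-th iterated join of `0 ⟶ B`. -/
def IsGaneaMap (P : PreJCat C) (B : C) (n : ℕ) {G : C} (g : G ⟶ B) : Prop :=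
  P.IsIterJoin (0 : (0 : C) ⟶ B) n g

/-- The Lusternik-Schnirelmann category of an object. -/
noncomputable def catObj (P : PreJCat C) (B : C) : ℕ∞ :=
  sInf {n : ℕ∞ | ∃ m : ℕ, n = (m : ℕ∞) ∧
    ∃ (G : C) (g : G ⟶ B), P.IsGaneaMap B m g ∧ P.HasWeakSection g}

/-- The Lusternik-Schnirelmann category of a morphism `b : B ⟶ B'`:
least `n` such that `b` admits a weak lifting along the `n`-th Ganea map of `B'`. -/
noncomputable def catMor (P : PreJCat C) {B B' : C} (b : B ⟶ B') : ℕ∞ :=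
  sInf {n : ℕ∞ | ∃ m : ℕ, n = (m : ℕ∞) ∧
    ∃ (G : C) (g : G ⟶ B'), P.IsGaneaMap B' m g ∧ P.WeakLifting b g}

/-- One step of a zigzag: a weak equivalence of morphisms in the arrow category. -/
def MorWeqStep (P : PreJCat C) (u v : Arrow C) : Prop :=
  ∃ h : u ⟶ v, P.weq h.left ∧ P.weq h.right

/-- Two morphisms are weakly equivalent: joined by a finite zigzag of weak
equivalences of morphisms. -/
def WeaklyEquivMor (P : PreJCat C) (u v : Arrow C) : Prop :=
  Relation.EqvGen P.MorWeqStep u v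

def ObjWeqStep (P : PreJCat C) (X Y : C) : Prop := ∃ f : X ⟶ Y, P.weq f

/-- Two objects are weakly equivalent: joined by a finite zigzag of weak equivalences. -/
def WeaklyEquivObj (P : PreJCat C) (X Y : C) : Prop :=
  Relation.EqvGen P.ObjWeqStep X Y

/-- The abstract topological complexity of an e-fibrant object:
the sectional category of the diagonal `B ⟶ B × B`. -/
noncomputable def TCE (P : PreJCat C) (B : C) : ℕ∞ :=
  ⨅ (Pd : C) (p1 : Pd ⟶ B) (p2 : Pd ⟶ B) (_ : IsBinProd p1 p2)
    (Δ : B ⟶ Pd) (_ : Δ ≫ p1 = 𝟙 B ∧ Δ ≫ p2 = 𝟙 B), P.Gsecat Δ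

/-- The abstract topological complexity of an arbitrary object, via e-fibrant
replacements. -/
noncomputable def TC (P : PreJCat C) (B : C) : ℕ∞ :=
  ⨅ (F : C) (τ : B ⟶ F) (_ : P.weq τ ∧ P.EFibrant F), P.TCE F

end PreJCat

variable (C)

/-- A J-category: (J1)-(J4) together with the cube axiom (J5). -/
structure JCat extends PreJCat C where
  /-- (J5) the cube axiom: in a commutative cube whose bottom face is a homotopy
  pushout and whose vertical faces are homotopy pullbacks, the top face is a
  homotopy pushout. -/
  cube : ∀ {X00 X01 X10 X11 Y00 Y01 Y10 Y11 : C}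
    {tf : X00 ⟶ X01} {tg : X00 ⟶ X10} {ti : X01 ⟶ X11} {tj : X10 ⟶ X11}
    {bf : Y00 ⟶ Y01} {bg : Y00 ⟶ Y10} {bi : Y01 ⟶ Y11} {bj : Y10 ⟶ Y11}
    {v00 : X00 ⟶ Y00} {v01 : X01 ⟶ Y01} {v10 : X10 ⟶ Y10} {v11 : X11 ⟶ Y11},
    tf ≫ ti = tg ≫ tj →
    toPreJCat.IsHPO bf bg bi bj →
    toPreJCat.IsHPB tf v00 v01 bf →
    toPreJCat.IsHPB tg v00 v10 bg →
    toPreJCat.IsHPB ti v01 v11 bi →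
    toPreJCat.IsHPB tj v10 v11 bj →
    toPreJCat.IsHPO tf tg ti tj

variable {C}

/-- A modelization functor: preserves weak equivalences, homotopy pullbacks and
homotopy pushouts. -/
structure ModelizationFunctor {D : Type u'} [Category.{v'} D] [HasZeroObject D]
    [HasZeroMorphisms D] (P : PreJCat C) (Q : PreJCat D) where
  F : C ⥤ D
  map_weq : ∀ {X Y : C} (f : X ⟶ Y), P.weq f → Q.weq (F.map f)
  map_hpb : ∀ {Dd A Cc B : C} {f' : Dd ⟶ Cc} {g' : Dd ⟶ A} {g : Cc ⟶ B} {f : A ⟶ B},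
    P.IsHPB f' g' g f → Q.IsHPB (F.map f') (F.map g') (F.map g) (F.map f)
  map_hpo : ∀ {A B Cc Dd : C} {f : A ⟶ B} {g : A ⟶ Cc} {i' : B ⟶ Dd} {j' : Cc ⟶ Dd},
    P.IsHPO f g i' j' → Q.IsHPO (F.map f) (F.map g) (F.map i') (F.map j')

set_option linter.unusedSectionVars false

namespace PreJCat

section Aux

variable {𝒞 : Type*} [Category 𝒞] [HasZeroObject 𝒞] [HasZeroMorphisms 𝒞] {T : PreJCat 𝒞}

lemma weq_iso {X Y : 𝒞} (f : X ⟶ Y) [IsIso f] : T.weq f := (T.iso_triv_fib f inferInstance).2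

lemma weq_id (X : 𝒞) : T.weq (𝟙 X) := weq_iso _

lemma fib_iso {X Y : 𝒞} (f : X ⟶ Y) [IsIso f] : T.fib f := (T.iso_triv_fib f inferInstance).1

lemma cofib_iso {X Y : 𝒞} (f : X ⟶ Y) [IsIso f] : T.cofib f := (T.iso_triv_cofib f inferInstance).1

lemma cofib_of_po {A X Y Q : 𝒞} {i : A ⟶ X} {g : A ⟶ Y} {inl : X ⟶ Q} {inr : Y ⟶ Q}
    (hi : T.cofib i) (hpo : IsPushout i g inl inr) : T.cofib inr := by
  obtain ⟨Q₀, inl₀, inr₀, hpo₀, hc₀⟩ := T.po_exists i g hi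
  rw [← IsPushout.inr_isoIsPushout_hom X Y hpo₀ hpo]
  exact T.cofib_comp hc₀ (cofib_iso _)

lemma fib_of_pb {E B B' Q : 𝒞} {p : E ⟶ B} {f : B' ⟶ B} {fb : Q ⟶ E} {pb : Q ⟶ B'}
    (hp : T.fib p) (hpb : IsPullback fb pb p f) : T.fib pb := by
  obtain ⟨P₀, fb₀, pb₀, hpb₀, hf₀⟩ := T.pb_exists p f hp
  rw [← IsPullback.isoIsPullback_hom_snd E B' hpb hpb₀]
  exact T.fib_comp (fib_iso _) hf₀

/-- Pullback comparison along a trivial fibration between the feet. -/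
lemma weq_pb_trivFib {W W' B A Pt Pt' : 𝒞} {k₀ : W ⟶ W'} {r : W' ⟶ B} {f : A ⟶ B}
    {fb : Pt ⟶ W} {pb : Pt ⟶ A} {fb' : Pt' ⟶ W'} {pb' : Pt' ⟶ A}
    (hkf : T.fib k₀) (hkw : T.weq k₀)
    (hP : IsPullback fb pb (k₀ ≫ r) f) (hP' : IsPullback fb' pb' r f)
    {φ : Pt ⟶ Pt'} (h1 : φ ≫ fb' = fb ≫ k₀) (h2 : φ ≫ pb' = pb) : T.weq φ := by
  have hbig : IsPullback fb (φ ≫ pb') (k₀ ≫ r) f := by rw [h2]; exact hP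
  have htop : IsPullback fb φ k₀ fb' := IsPullback.of_bot hbig h1.symm hP'
  exact (T.pb_weq hkf htop).2 hkw

/-- Pushout comparison along a trivial cofibration. -/
lemma weq_po_trivCofib {A W W₂ Y V Q' : 𝒞} {b : A ⟶ W} {k₀ : W ⟶ W₂} {g : A ⟶ Y}
    {inlV : W ⟶ V} {inrV : Y ⟶ V} {inlQ : W₂ ⟶ Q'} {inrQ : Y ⟶ Q'}
    (hkc : T.cofib k₀) (hkw : T.weq k₀)
    (hV : IsPushout b g inlV inrV) (hQ : IsPushout (b ≫ k₀) g inlQ inrQ)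
    {φ : V ⟶ Q'} (h1 : inlV ≫ φ = k₀ ≫ inlQ) (h2 : inrV ≫ φ = inrQ) : T.weq φ := by
  have hbig : IsPushout (b ≫ k₀) g inlQ (inrV ≫ φ) := by rw [h2]; exact hQ
  have hright : IsPushout k₀ inlV inlQ φ := IsPushout.of_left hbig h1.symm hV
  exact (T.po_weq hkc hright).2 hkw

/-- Ken Brown: pullback comparison along a weak equivalence between fibrations
over the same base. -/
lemma weq_pb_weqFib {W W' B A Pt Pt' : 𝒞} {k : W ⟶ W'} {pW : W ⟶ B} {r : W' ⟶ B} {f : A ⟶ B}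
    (hpW : T.fib pW) (hr : T.fib r) (hk : T.weq k) (hcomp : k ≫ r = pW)
    {fb : Pt ⟶ W} {pb : Pt ⟶ A} {fb' : Pt' ⟶ W'} {pb' : Pt' ⟶ A}
    (hP : IsPullback fb pb pW f) (hP' : IsPullback fb' pb' r f)
    {φ : Pt ⟶ Pt'} (h1 : φ ≫ fb' = fb ≫ k) (h2 : φ ≫ pb' = pb) : T.weq φ := by
  obtain ⟨S, fbS, pbS, hS, hfS⟩ := T.pb_exists pW r hpW
  have hfbS : T.fib fbS := fib_of_pb hr hS.flip
  obtain ⟨ℓ, hℓ1, hℓ2⟩ : ∃ ℓ : W ⟶ S, ℓ ≫ fbS = 𝟙 W ∧ ℓ ≫ pbS = k := by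
    have hl : (𝟙 W) ≫ pW = k ≫ r := by rw [Category.id_comp, hcomp]
    exact ⟨hS.lift (𝟙 W) k hl, hS.lift_fst _ _ _, hS.lift_snd _ _ _⟩
  obtain ⟨Tt, νT, pT, hνT, hpT, hfacT⟩ := T.F_fac ℓ
  have hνη₁ : νT ≫ (pT ≫ fbS) = 𝟙 W := by rw [← Category.assoc, hfacT, hℓ1]
  have hνη₂ : νT ≫ (pT ≫ pbS) = k := by rw [← Category.assoc, hfacT, hℓ2]
  have hη₁f : T.fib (pT ≫ fbS) := T.fib_comp hpT hfbS
  have hη₂f : T.fib (pT ≫ pbS) := T.fib_comp hpT hfS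
  have hη₁w : T.weq (pT ≫ fbS) := T.weq_of_comp_right hνT (by rw [hνη₁]; exact weq_id _)
  have hη₂w : T.weq (pT ≫ pbS) := T.weq_of_comp_right hνT (by rw [hνη₂]; exact hk)
  have hover : (pT ≫ pbS) ≫ r = (pT ≫ fbS) ≫ pW := by
    rw [Category.assoc, Category.assoc, hS.w]
  obtain ⟨PT, fbT, pbT, hPT, _⟩ := T.pb_exists ((pT ≫ fbS) ≫ pW) f (T.fib_comp hη₁f hpW)
  obtain ⟨Gη₁, hG₁1, hG₁2⟩ : ∃ G : PT ⟶ Pt, G ≫ fb = fbT ≫ (pT ≫ fbS) ∧ G ≫ pb = pbT := by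
    have : (fbT ≫ (pT ≫ fbS)) ≫ pW = pbT ≫ f := by rw [Category.assoc, ← hPT.w]
    exact ⟨hP.lift _ _ this, hP.lift_fst _ _ _, hP.lift_snd _ _ _⟩
  have hGη₁w : T.weq Gη₁ := weq_pb_trivFib hη₁f hη₁w hPT hP hG₁1 hG₁2
  have hPT' : IsPullback fbT pbT ((pT ≫ pbS) ≫ r) f := by rw [hover]; exact hPT
  obtain ⟨Gη₂, hG₂1, hG₂2⟩ : ∃ G : PT ⟶ Pt', G ≫ fb' = fbT ≫ (pT ≫ pbS) ∧ G ≫ pb' = pbT := by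
    have : (fbT ≫ (pT ≫ pbS)) ≫ r = pbT ≫ f := by rw [Category.assoc, hover, ← hPT.w]
    exact ⟨hP'.lift _ _ this, hP'.lift_fst _ _ _, hP'.lift_snd _ _ _⟩
  have hGη₂w : T.weq Gη₂ := weq_pb_trivFib hη₂f hη₂w hPT' hP' hG₂1 hG₂2
  obtain ⟨GνT, hGν1, hGν2⟩ : ∃ G : Pt ⟶ PT, G ≫ fbT = fb ≫ νT ∧ G ≫ pbT = pb := by
    have : (fb ≫ νT) ≫ ((pT ≫ fbS) ≫ pW) = pb ≫ f := by
      simp only [Category.assoc]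
      rw [reassoc_of% hνη₁]
      exact hP.w
    exact ⟨hPT.lift _ _ this, hPT.lift_fst _ _ _, hPT.lift_snd _ _ _⟩
  have hGν₁ : GνT ≫ Gη₁ = 𝟙 Pt := by
    apply hP.hom_ext
    · simp only [Category.assoc, Category.id_comp]
      rw [hG₁1, reassoc_of% hGν1, hνη₁, Category.comp_id]
    · simp only [Category.assoc, Category.id_comp]
      rw [hG₁2, hGν2]
  have hGνw : T.weq GνT := T.weq_of_comp_left hGη₁w (by rw [hGν₁]; exact weq_id _)
  have hφ : φ = GνT ≫ Gη₂ := by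
    apply hP'.hom_ext
    · rw [h1]
      simp only [Category.assoc]
      rw [hG₂1, reassoc_of% hGν1, hνη₂]
    · rw [h2]
      simp only [Category.assoc]
      rw [hG₂2, hGν2]
  rw [hφ]; exact T.weq_comp hGνw hGη₂w

/-- Ken Brown: pushout comparison along a weak equivalence between cofibrations
under the same object. -/
lemma weq_po_weqCofib {A W X' Y V Q' : 𝒞} {b : A ⟶ W} {c : A ⟶ X'} {k : W ⟶ X'} {g : A ⟶ Y}
    (hb : T.cofib b) (hc : T.cofib c) (hk : T.weq k) (hcomp : b ≫ k = c)
    {inlV : W ⟶ V} {inrV : Y ⟶ V} {inlQ : X' ⟶ Q'} {inrQ : Y ⟶ Q'}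
    (hV : IsPushout b g inlV inrV) (hQ : IsPushout c g inlQ inrQ)
    {φ : V ⟶ Q'} (h1 : inlV ≫ φ = k ≫ inlQ) (h2 : inrV ≫ φ = inrQ) : T.weq φ := by
  obtain ⟨S, uS, vS, hS, hvS⟩ := T.po_exists b c hb
  have huS : T.cofib uS := cofib_of_po hc hS.flip
  obtain ⟨σS, hσ1, hσ2⟩ : ∃ σS : S ⟶ X', uS ≫ σS = k ∧ vS ≫ σS = 𝟙 X' := by
    have hsq : b ≫ k = c ≫ 𝟙 X' := by rw [Category.comp_id, hcomp]
    exact ⟨hS.desc k (𝟙 X') hsq, hS.inl_desc _ _ _, hS.inr_desc _ _ _⟩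
  obtain ⟨Tt, cS, wS, hcS, hwS, hfacS⟩ := T.C_fac σS
  have hη₁w' : (uS ≫ cS) ≫ wS = k := by rw [Category.assoc, hfacS, hσ1]
  have hη₂w' : (vS ≫ cS) ≫ wS = 𝟙 X' := by rw [Category.assoc, hfacS, hσ2]
  have hη₁c : T.cofib (uS ≫ cS) := T.cofib_comp huS hcS
  have hη₂c : T.cofib (vS ≫ cS) := T.cofib_comp hvS hcS
  have hη₁w : T.weq (uS ≫ cS) := T.weq_of_comp_left hwS (by rw [hη₁w']; exact hk)
  have hη₂w : T.weq (vS ≫ cS) := T.weq_of_comp_left hwS (by rw [hη₂w']; exact weq_id _)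
  have hunder : b ≫ (uS ≫ cS) = c ≫ (vS ≫ cS) := by
    rw [← Category.assoc, ← Category.assoc, hS.w]
  obtain ⟨PT, inlT, inrT, hPT, _⟩ := T.po_exists (b ≫ (uS ≫ cS)) g (T.cofib_comp hb hη₁c)
  obtain ⟨Gη₁, hG₁1, hG₁2⟩ : ∃ G : V ⟶ PT, inlV ≫ G = (uS ≫ cS) ≫ inlT ∧ inrV ≫ G = inrT := by
    have : b ≫ ((uS ≫ cS) ≫ inlT) = g ≫ inrT := by rw [← Category.assoc, hPT.w]
    exact ⟨hV.desc _ _ this, hV.inl_desc _ _ _, hV.inr_desc _ _ _⟩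
  have hGη₁w : T.weq Gη₁ := weq_po_trivCofib hη₁c hη₁w hV hPT hG₁1 hG₁2
  have hPT' : IsPushout (c ≫ (vS ≫ cS)) g inlT inrT := by rw [← hunder]; exact hPT
  obtain ⟨Gη₂, hG₂1, hG₂2⟩ : ∃ G : Q' ⟶ PT, inlQ ≫ G = (vS ≫ cS) ≫ inlT ∧ inrQ ≫ G = inrT := by
    have : c ≫ ((vS ≫ cS) ≫ inlT) = g ≫ inrT := by
      rw [← Category.assoc, ← hunder, hPT.w]
    exact ⟨hQ.desc _ _ this, hQ.inl_desc _ _ _, hQ.inr_desc _ _ _⟩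
  have hGη₂w : T.weq Gη₂ := weq_po_trivCofib hη₂c hη₂w hQ hPT' hG₂1 hG₂2
  obtain ⟨GwS, hGw1, hGw2⟩ : ∃ G : PT ⟶ Q', inlT ≫ G = wS ≫ inlQ ∧ inrT ≫ G = inrQ := by
    have : (b ≫ (uS ≫ cS)) ≫ (wS ≫ inlQ) = g ≫ inrQ := by
      rw [Category.assoc, ← Category.assoc (uS ≫ cS), hη₁w', ← Category.assoc, hcomp, hQ.w]
    exact ⟨hPT.desc _ _ this, hPT.inl_desc _ _ _, hPT.inr_desc _ _ _⟩
  have hGcomp : Gη₂ ≫ GwS = 𝟙 Q' := by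
    apply hQ.hom_ext
    · rw [← Category.assoc, hG₂1, Category.assoc, hGw1, ← Category.assoc, hη₂w',
        Category.id_comp, Category.comp_id]
    · rw [← Category.assoc, hG₂2, hGw2, Category.comp_id]
  have hGwSw : T.weq GwS := T.weq_of_comp_right hGη₂w (by rw [hGcomp]; exact weq_id _)
  have hφ : φ = Gη₁ ≫ GwS := by
    apply hV.hom_ext
    · rw [h1, ← Category.assoc, hG₁1, Category.assoc, hGw1, ← Category.assoc, hη₁w']
    · rw [h2, ← Category.assoc, hG₁2, hGw2]
  rw [hφ]; exact T.weq_comp hGη₁w hGwSw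

/-- Cogluing: pullback comparison along a weak equivalence of cospans. -/
lemma cogluing {A B E A' B' E' Pt Pt' : 𝒞} {f : A ⟶ B} {q : E ⟶ B} {f' : A' ⟶ B'} {q' : E' ⟶ B'}
    (hq : T.fib q) (hq' : T.fib q')
    {a : A ⟶ A'} {bb : B ⟶ B'} {e : E ⟶ E'}
    (ha : T.weq a) (hbb : T.weq bb) (he : T.weq e)
    (hsq1 : q ≫ bb = e ≫ q') (hsq2 : f ≫ bb = a ≫ f')
    {fb : Pt ⟶ E} {pb : Pt ⟶ A} {fb' : Pt' ⟶ E'} {pb' : Pt' ⟶ A'}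
    (hP : IsPullback fb pb q f) (hP' : IsPullback fb' pb' q' f')
    {φ : Pt ⟶ Pt'} (h1 : φ ≫ fb' = fb ≫ e) (h2 : φ ≫ pb' = pb ≫ a) : T.weq φ := by
  obtain ⟨W, fbW, pbW, hW, hWf⟩ := T.pb_exists q' bb hq'
  have hfbW : T.weq fbW := (T.pb_weq hq' hW).1 hbb
  obtain ⟨k, hk1, hk2⟩ : ∃ k : E ⟶ W, k ≫ fbW = e ∧ k ≫ pbW = q :=
    ⟨hW.lift e q hsq1.symm, hW.lift_fst _ _ _, hW.lift_snd _ _ _⟩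
  have hkw : T.weq k := T.weq_of_comp_left hfbW (by rw [hk1]; exact he)
  have hpb' : T.fib pb' := fib_of_pb hq' hP'
  obtain ⟨R, fbR, pbR, hR, _⟩ := T.pb_exists pb' a hpb'
  have hfbR : T.weq fbR := (T.pb_weq hpb' hR).1 ha
  have hbigR : IsPullback (fbR ≫ fb') pbR q' (a ≫ f') := hR.paste_horiz hP'
  obtain ⟨V, fbV, pbV, hV0, _⟩ := T.pb_exists pbW f hWf
  have hbigV : IsPullback (fbV ≫ fbW) pbV q' (f ≫ bb) := hV0.paste_horiz hW
  have hbigV' : IsPullback (fbV ≫ fbW) pbV q' (a ≫ f') := by rw [← hsq2]; exact hbigV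
  obtain ⟨ψ, hψ1, hψ2⟩ : ∃ ψ : Pt ⟶ V, ψ ≫ fbV = fb ≫ k ∧ ψ ≫ pbV = pb := by
    have : (fb ≫ k) ≫ pbW = pb ≫ f := by rw [Category.assoc, hk2, hP.w]
    exact ⟨hV0.lift _ _ this, hV0.lift_fst _ _ _, hV0.lift_snd _ _ _⟩
  have hψw : T.weq ψ := weq_pb_weqFib hq hWf hkw hk2 hP hV0 hψ1 hψ2
  obtain ⟨e_RV, he1, he2⟩ : ∃ e : V ≅ R, e.hom ≫ (fbR ≫ fb') = fbV ≫ fbW ∧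
      e.hom ≫ pbR = pbV := by
    refine ⟨IsPullback.isoIsPullback E' A hbigV' hbigR, ?_, ?_⟩
    · exact IsPullback.isoIsPullback_hom_fst E' A hbigV' hbigR
    · exact IsPullback.isoIsPullback_hom_snd E' A hbigV' hbigR
  have hφ : φ = ψ ≫ e_RV.hom ≫ fbR := by
    apply hP'.hom_ext
    · rw [h1]
      simp only [Category.assoc]
      rw [he1, reassoc_of% hψ1, hk1]
    · rw [h2]
      simp only [Category.assoc]
      rw [hR.w, reassoc_of% he2, reassoc_of% hψ2]
  rw [hφ]
  exact T.weq_comp hψw (T.weq_comp (weq_iso _) hfbR)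

/-- Gluing: pushout comparison along a weak equivalence of spans. -/
lemma gluing {A X Y A' X' Y' Q Q' : 𝒞} {i : A ⟶ X} {g : A ⟶ Y} {i' : A' ⟶ X'} {g' : A' ⟶ Y'}
    (hi : T.cofib i) (hi' : T.cofib i')
    {a : A ⟶ A'} {x : X ⟶ X'} {y : Y ⟶ Y'}
    (ha : T.weq a) (hx : T.weq x) (hy : T.weq y)
    (hsq1 : i ≫ x = a ≫ i') (hsq2 : g ≫ y = a ≫ g')
    {inl : X ⟶ Q} {inr : Y ⟶ Q} {inl' : X' ⟶ Q'} {inr' : Y' ⟶ Q'}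
    (hQ : IsPushout i g inl inr) (hQ' : IsPushout i' g' inl' inr')
    {φ : Q ⟶ Q'} (h1 : inl ≫ φ = x ≫ inl') (h2 : inr ≫ φ = y ≫ inr') : T.weq φ := by
  obtain ⟨W, wa, a₁, hW, ha₁⟩ := T.po_exists i a hi
  have hwa : T.weq wa := (T.po_weq hi hW).1 ha
  obtain ⟨k, hk1, hk2⟩ : ∃ k : W ⟶ X', wa ≫ k = x ∧ a₁ ≫ k = i' :=
    ⟨hW.desc x i' hsq1, hW.inl_desc _ _ _, hW.inr_desc _ _ _⟩
  have hkw : T.weq k := T.weq_of_comp_right hwa (by rw [hk1]; exact hx)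
  have hinr : T.cofib inr := cofib_of_po hi hQ
  obtain ⟨R, rQ, rY, hRpo, _⟩ := T.po_exists inr y hinr
  have hrQ : T.weq rQ := (T.po_weq hinr hRpo).1 hy
  have hbigR : IsPushout i (g ≫ y) (inl ≫ rQ) rY := hQ.paste_vert hRpo
  obtain ⟨V, mW, mY, hVpo, _⟩ := T.po_exists a₁ g' ha₁
  have hbigV : IsPushout i (a ≫ g') (wa ≫ mW) mY := hW.paste_vert hVpo
  have hbigV' : IsPushout i (g ≫ y) (wa ≫ mW) mY := by rw [hsq2]; exact hbigV
  obtain ⟨ψ, hψ1, hψ2⟩ : ∃ ψ : V ⟶ Q', mW ≫ ψ = k ≫ inl' ∧ mY ≫ ψ = inr' := by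
    have : a₁ ≫ (k ≫ inl') = g' ≫ inr' := by rw [← Category.assoc, hk2, hQ'.w]
    exact ⟨hVpo.desc _ _ this, hVpo.inl_desc _ _ _, hVpo.inr_desc _ _ _⟩
  have hψw : T.weq ψ := weq_po_weqCofib ha₁ hi' hkw hk2 hVpo hQ' hψ1 hψ2
  obtain ⟨e_RV, he1, he2⟩ : ∃ e : R ≅ V, (inl ≫ rQ) ≫ e.hom = wa ≫ mW ∧
      rY ≫ e.hom = mY := by
    refine ⟨IsPushout.isoIsPushout X Y' hbigR hbigV', ?_, ?_⟩
    · exact IsPushout.inl_isoIsPushout_hom X Y' hbigR hbigV'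
    · exact IsPushout.inr_isoIsPushout_hom X Y' hbigR hbigV'
  have he1' : inl ≫ rQ ≫ e_RV.hom = wa ≫ mW := by rw [← Category.assoc]; exact he1
  have hφ : φ = rQ ≫ e_RV.hom ≫ ψ := by
    apply hQ.hom_ext
    · rw [h1, reassoc_of% he1', hψ1, reassoc_of% hk1]
    · rw [h2, reassoc_of% hRpo.w, reassoc_of% he2, hψ2]
  rw [hφ]
  exact T.weq_comp hrQ (T.weq_comp (weq_iso _) hψw)

/-- Comparison of two F-resolutions of the same morphism. -/
lemma resolution_compare {X B E Et : 𝒞} {τ : X ⟶ E} {q : E ⟶ B} {u : X ⟶ Et} {qt : Et ⟶ B}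
    (hτ : T.weq τ) (hq : T.fib q) (hu : T.weq u) (hqt : T.fib qt) (hfac : τ ≫ q = u ≫ qt)
    (hcof : T.CofModel E) : ∃ φ : E ⟶ Et, T.weq φ ∧ φ ≫ qt = q := by
  obtain ⟨Pb, fbP, pbP, hPb, _⟩ := T.pb_exists qt q hqt
  obtain ⟨w, hw1, hw2⟩ : ∃ w : X ⟶ Pb, w ≫ fbP = u ∧ w ≫ pbP = τ :=
    ⟨hPb.lift u τ hfac.symm, hPb.lift_fst _ _ _, hPb.lift_snd _ _ _⟩
  obtain ⟨Wf, νW, πW, hνW, hπW, hfacW⟩ := T.F_fac w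
  have hfibWE : T.fib (πW ≫ pbP) := T.fib_comp hπW (fib_of_pb hqt hPb)
  have hweqWE : T.weq (πW ≫ pbP) :=
    T.weq_of_comp_right hνW (by rw [← Category.assoc, hfacW, hw2]; exact hτ)
  obtain ⟨sE, hsE⟩ := hcof (πW ≫ pbP) hfibWE hweqWE
  refine ⟨sE ≫ πW ≫ fbP, ?_, ?_⟩
  · have h1 : T.weq sE := T.weq_of_comp_left hweqWE (by rw [hsE]; exact weq_id _)
    have h2 : T.weq (πW ≫ fbP) :=
      T.weq_of_comp_right hνW (by rw [← Category.assoc, hfacW, hw1]; exact hu)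
    exact T.weq_comp h1 h2
  · rw [Category.assoc, Category.assoc, hPb.w, ← Category.assoc, ← Category.assoc,
      Category.assoc sE, hsE, Category.id_comp]

/-- If a map into the total space of a fibration composes to a weak equivalence,
the fibration admits a section (cofibrant base). -/
lemma section_of_weq_over {Bb B' E' : 𝒞} {q' : E' ⟶ B'} (hq' : T.fib q')
    {r : Bb ⟶ E'} (hrw : T.weq (r ≫ q')) (hcof : T.CofModel B') :
    ∃ s : B' ⟶ E', s ≫ q' = 𝟙 B' := by
  obtain ⟨V, wr, pr, hwr, hpr, hfac⟩ := T.F_fac r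
  have hfib : T.fib (pr ≫ q') := T.fib_comp hpr hq'
  have hweq : T.weq (pr ≫ q') :=
    T.weq_of_comp_right hwr (by rw [← Category.assoc, hfac]; exact hrw)
  obtain ⟨u, hu⟩ := hcof _ hfib hweq
  exact ⟨u ≫ pr, by rw [Category.assoc, hu]⟩

/-- Weak sections transfer along weak equivalences of morphisms. -/
lemma hasWeakSection_transfer {M X'' Bp B'' : 𝒞} {h : M ⟶ Bp} {h'' : X'' ⟶ B''}
    {α : M ⟶ X''} {ω : Bp ⟶ B''} (hα : T.weq α) (hω : T.weq ω)
    (hsq : h ≫ ω = α ≫ h'') (hws : T.HasWeakSection h)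
    (hcof : ∀ X : 𝒞, T.CofModel X) : T.HasWeakSection h'' := by
  obtain ⟨E', τ', q', hτ', hq', hfacq⟩ := T.F_fac h''
  obtain ⟨Pc, fbc, pbc, hPc, hfibc⟩ := T.pb_exists q' ω hq'
  have hfbc : T.weq fbc := (T.pb_weq hq' hPc).1 hω
  obtain ⟨u, hu1, hu2⟩ : ∃ u : M ⟶ Pc, u ≫ fbc = α ≫ τ' ∧ u ≫ pbc = h := by
    have : (α ≫ τ') ≫ q' = h ≫ ω := by rw [Category.assoc, hfacq, hsq]
    exact ⟨hPc.lift _ _ this, hPc.lift_fst _ _ _, hPc.lift_snd _ _ _⟩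
  have huw : T.weq u := T.weq_of_comp_left hfbc (by rw [hu1]; exact T.weq_comp hα hτ')
  obtain ⟨E, τ, q, hτ, hq, hfac, s, hs⟩ := hws
  obtain ⟨ψ, hψw, hψ⟩ := resolution_compare hτ hq huw hfibc (by rw [hfac, hu2]) (hcof E)
  have hr : T.weq ((s ≫ ψ ≫ fbc) ≫ q') := by
    have : (s ≫ ψ ≫ fbc) ≫ q' = ω := by
      rw [Category.assoc, Category.assoc, hPc.w, ← Category.assoc ψ, hψ, ← Category.assoc,
        hs, Category.id_comp]
    rw [this]; exact hω
  obtain ⟨s'', hs''⟩ := section_of_weq_over hq' hr (hcof B'')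
  exact ⟨E', τ', q', hτ', hq', hfacq, s'', hs''⟩

lemma isHPB_of_isPullback {E B B' Pt : 𝒞} {p : E ⟶ B} {f : B' ⟶ B} {fb : Pt ⟶ E} {pb : Pt ⟶ B'}
    (hp : T.fib p) (h : IsPullback fb pb p f) : T.IsHPB fb pb p f :=
  ⟨h.w, E, 𝟙 E, p, weq_id _, hp, by simp, Pt, fb, pb, h, 𝟙 Pt, weq_id _, by simp, by simp⟩

lemma isHPO_of_isPushout {A X Y Q : 𝒞} {i : A ⟶ X} {g : A ⟶ Y} {inl : X ⟶ Q} {inr : Y ⟶ Q}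
    (hi : T.cofib i) (h : IsPushout i g inl inr) : T.IsHPO i g inl inr :=
  ⟨h.w, X, i, 𝟙 X, hi, weq_id _, by simp, Q, inl, inr, h, 𝟙 Q, weq_id _, by simp, by simp⟩

end Aux

end PreJCat

section ProdZero

variable {C : Type u} [Category.{v} C] [HasZeroObject C] [HasZeroMorphisms C]

lemma isBinProd_of_isPullback {X Y Pt : C} {p1 : Pt ⟶ X} {p2 : Pt ⟶ Y}
    (h : IsPullback p1 p2 (0 : X ⟶ 0) (0 : Y ⟶ 0)) : IsBinProd p1 p2 := by
  refine ⟨BinaryFan.isLimitMk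
    (fun s => h.lift s.fst s.snd ((isZero_zero C).eq_of_tgt _ _)) ?_ ?_ ?_⟩
  · intro s; exact h.lift_fst _ _ _
  · intro s; exact h.lift_snd _ _ _
  · intro s m h1 h2
    apply h.hom_ext
    · exact h1.trans (h.lift_fst _ _ _).symm
    · exact h2.trans (h.lift_snd _ _ _).symm

lemma isPullback_of_isBinProd {X Y Pt : C} {p1 : Pt ⟶ X} {p2 : Pt ⟶ Y}
    (h : IsBinProd p1 p2) : IsPullback p1 p2 (0 : X ⟶ (0 : C)) (0 : Y ⟶ 0) := by
  obtain ⟨hl⟩ := h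
  have lift_fst : ∀ {W : C} (a : W ⟶ X) (b : W ⟶ Y),
      hl.lift (BinaryFan.mk a b) ≫ p1 = a := fun a b => by
    simpa using hl.fac (BinaryFan.mk a b) ⟨WalkingPair.left⟩
  have lift_snd : ∀ {W : C} (a : W ⟶ X) (b : W ⟶ Y),
      hl.lift (BinaryFan.mk a b) ≫ p2 = b := fun a b => by
    simpa using hl.fac (BinaryFan.mk a b) ⟨WalkingPair.right⟩
  have heq : p1 ≫ (0 : X ⟶ (0 : C)) = p2 ≫ (0 : Y ⟶ 0) := (isZero_zero C).eq_of_tgt _ _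
  have := IsPullback.of_isLimit (c := PullbackCone.mk p1 p2 heq) ?_
  · exact this
  · refine PullbackCone.IsLimit.mk heq
      (fun s => hl.lift (BinaryFan.mk s.fst s.snd)) ?_ ?_ ?_
    · intro s; exact lift_fst _ _
    · intro s; exact lift_snd _ _
    · intro s m h1 h2
      refine BinaryFan.IsLimit.hom_ext hl ?_ ?_
      · simpa [lift_fst] using h1
      · simpa [lift_snd] using h2

end ProdZero

section Transfer

variable {C : Type u} [Category.{v} C] [HasZeroObject C] [HasZeroMorphisms C]
variable {D : Type u'} [Category.{v'} D] [HasZeroObject D] [HasZeroMorphisms D]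

set_option maxHeartbeats 1000000 in
lemma iterjoin_transfer {J : PreJCat C} {K : PreJCat D}
    (hd : ∀ X : D, K.CofModel X)
    (μ : ModelizationFunctor J K)
    {F Pd : C} {Δ : F ⟶ Pd}
    {Z P'' : D} {Δ'' : Z ⟶ P''} {σ : μ.F.obj F ⟶ Z} {ω : μ.F.obj Pd ⟶ P''}
    (hσ : K.weq σ) (hω : K.weq ω)
    (hbase : μ.F.map Δ ≫ ω = σ ≫ Δ'')
    {m : ℕ} {X : C} {h : X ⟶ Pd} (hIter : J.IsIterJoin Δ m h) :
    ∃ (X'' : D) (h'' : X'' ⟶ P''), K.IsIterJoin Δ'' m h'' ∧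
      ∃ (M : D) (m₁ : M ⟶ μ.F.obj X) (m₂ : M ⟶ X''),
        K.weq m₁ ∧ K.weq m₂ ∧ m₁ ≫ μ.F.map h ≫ ω = m₂ ≫ h'' := by
  induction hIter with
  | zero =>
      refine ⟨Z, Δ'', PreJCat.IsIterJoin.zero, μ.F.obj F, 𝟙 _, σ, PreJCat.weq_id _, hσ, ?_⟩
      rw [Category.id_comp, hbase]
  | @succ n X Y h h' hprev hjoin ih =>
      obtain ⟨E_C, τC, qC, hτC, hqC, hfacC, E'C, Z_C, fbarC, pbarC, iC, σC, aC, bC,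
        hpbC, hiC, hσC, hisC, hpoC, haC, hbC⟩ := hjoin
      obtain ⟨X'', h'', hIter'', M, m₁, m₂, hm₁, hm₂, hcomp⟩ := ih
      obtain ⟨-, E₁, τ₁, q₁, hτ₁, hq₁, hfac₁, Pt₁, u₁, v₁, hPt₁, w₁, hw₁, hw₁u, hw₁v⟩ :=
        μ.map_hpb (PreJCat.isHPB_of_isPullback hqC hpbC)
      obtain ⟨-, Z₀, i₀, σ₀, hi₀, hσ₀, hfac₀, Q₀, inl₀, inr₀, hQ₀, w₀, hw₀, hw₀l, hw₀r⟩ :=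
        μ.map_hpo (PreJCat.isHPO_of_isPushout hiC hpoC.flip)
      -- F-factorization of q₁ ≫ ω giving the fibrant resolution of the diagonal
      obtain ⟨E_D, ν'', q_D, hν'', hq_D, hfacD⟩ := K.F_fac (q₁ ≫ ω)
      obtain ⟨E₀, τ₀, q₀, hτ₀, hq₀, hfacE₀⟩ := K.F_fac Δ''
      have he₁q : (μ.F.map τC ≫ τ₁) ≫ q₁ = μ.F.map Δ := by
        rw [Category.assoc, hfac₁, ← CategoryTheory.Functor.map_comp, hfacC]
      have hkey : ((μ.F.map τC ≫ τ₁) ≫ ν'') ≫ q_D = σ ≫ Δ'' := by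
        rw [Category.assoc, hfacD, ← Category.assoc, he₁q, hbase]
      obtain ⟨θ, hθw, hθ⟩ := PreJCat.resolution_compare (T := K)
        (K.weq_comp hσ hτ₀) hq₀
        (K.weq_comp (K.weq_comp (μ.map_weq _ hτC) hτ₁) hν'') hq_D
        (by rw [Category.assoc, hfacE₀, ← hkey]) (hd E₀)
      have hτD : K.weq (τ₀ ≫ θ) := K.weq_comp hτ₀ hθw
      have hτDq : (τ₀ ≫ θ) ≫ q_D = Δ'' := by rw [Category.assoc, hθ, hfacE₀]
      -- pullback of q_D along h''
      obtain ⟨E'D, fbarD, pbarD, hpbD, hfibD⟩ := K.pb_exists q_D h'' hq_D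
      -- apex pullback
      obtain ⟨PN, fbN, pbN, hPN, -⟩ := K.pb_exists q₁ (m₁ ≫ μ.F.map h) hq₁
      -- comparison maps of pullbacks
      obtain ⟨φ₁, hφ₁u, hφ₁v⟩ : ∃ φ₁ : PN ⟶ Pt₁, φ₁ ≫ u₁ = fbN ∧ φ₁ ≫ v₁ = pbN ≫ m₁ := by
        have hsq : fbN ≫ q₁ = (pbN ≫ m₁) ≫ μ.F.map h := by rw [hPN.w, Category.assoc]
        exact ⟨hPt₁.lift _ _ hsq, hPt₁.lift_fst _ _ _, hPt₁.lift_snd _ _ _⟩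
      have hφ₁w : K.weq φ₁ := PreJCat.cogluing hq₁ hq₁ hm₁ (PreJCat.weq_id _)
        (PreJCat.weq_id _)
        (by rw [Category.comp_id, Category.id_comp])
        (by rw [Category.comp_id])
        hPN hPt₁ (by rw [hφ₁u, Category.comp_id]) hφ₁v
      obtain ⟨φ₂, hφ₂f, hφ₂p⟩ : ∃ φ₂ : PN ⟶ E'D, φ₂ ≫ fbarD = fbN ≫ ν'' ∧
          φ₂ ≫ pbarD = pbN ≫ m₂ := by
        have hsq : (fbN ≫ ν'') ≫ q_D = (pbN ≫ m₂) ≫ h'' := by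
          rw [Category.assoc, hfacD, ← Category.assoc, hPN.w, Category.assoc,
            Category.assoc, hcomp, ← Category.assoc]
        exact ⟨hpbD.lift _ _ hsq, hpbD.lift_fst _ _ _, hpbD.lift_snd _ _ _⟩
      have hφ₂w : K.weq φ₂ := PreJCat.cogluing hq₁ hq_D hm₂ hω hν''
        hfacD.symm
        (by rw [Category.assoc, hcomp])
        hPN hpbD hφ₂f hφ₂p
      -- pushforward of the cofibration i₀ along w₁
      obtain ⟨Zw, inlw, inrw, hZw, hinrw⟩ := K.po_exists i₀ w₁ hi₀
      have hinlw : K.weq inlw := (K.po_weq hi₀ hZw).1 hw₁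
      obtain ⟨χ₁, hχl, hχr⟩ : ∃ χ : Zw ⟶ E₁, inlw ≫ χ = σ₀ ≫ μ.F.map σC ≫ τ₁ ∧
          inrw ≫ χ = u₁ := by
        have hsq : i₀ ≫ (σ₀ ≫ μ.F.map σC ≫ τ₁) = w₁ ≫ u₁ := by
          rw [← Category.assoc, hfac₀, ← Category.assoc, ← CategoryTheory.Functor.map_comp, hisC, ← hw₁u]
        exact ⟨hZw.desc _ _ hsq, hZw.inl_desc _ _ _, hZw.inr_desc _ _ _⟩
      have hχw : K.weq χ₁ := K.weq_of_comp_right hinlw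
        (by rw [hχl]; exact K.weq_comp hσ₀ (K.weq_comp (μ.map_weq _ hσC) hτ₁))
      -- apex cofibrant resolution
      obtain ⟨Zh, iZ, ξ₁, hiZ, hξ₁, hfacZh⟩ := K.C_fac (φ₁ ≫ inrw)
      have hζ : iZ ≫ (ξ₁ ≫ χ₁ ≫ ν'') = φ₂ ≫ fbarD := by
        rw [← Category.assoc, hfacZh, Category.assoc, ← Category.assoc inrw, hχr,
          ← Category.assoc, hφ₁u, ← hφ₂f]
      obtain ⟨S₂, inlS, inrS, hS₂, hinrS⟩ := K.po_exists iZ φ₂ hiZ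
      have hinlS : K.weq inlS := (K.po_weq hiZ hS₂).1 hφ₂w
      obtain ⟨σD, hσDl, hσDr⟩ : ∃ σD : S₂ ⟶ E_D, inlS ≫ σD = ξ₁ ≫ χ₁ ≫ ν'' ∧
          inrS ≫ σD = fbarD :=
        ⟨hS₂.desc _ _ hζ, hS₂.inl_desc _ _ _, hS₂.inr_desc _ _ _⟩
      have hσDw : K.weq σD := K.weq_of_comp_right hinlS
        (by rw [hσDl]; exact K.weq_comp hξ₁ (K.weq_comp hχw hν''))
      -- the join pushout on the D side
      obtain ⟨JD, bD, aD, hJD, -⟩ := K.po_exists inrS pbarD hinrS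
      obtain ⟨jD, haD, hbD⟩ : ∃ jD : JD ⟶ P'', aD ≫ jD = h'' ∧ bD ≫ jD = σD ≫ q_D := by
        have hsq : pbarD ≫ h'' = inrS ≫ (σD ≫ q_D) := by
          rw [← Category.assoc, hσDr, hpbD.w]
        exact ⟨hJD.flip.desc h'' (σD ≫ q_D) hsq, hJD.flip.inl_desc _ _ _,
          hJD.flip.inr_desc _ _ _⟩
      have hJoin : K.IsJoin h'' Δ'' jD :=
        ⟨E_D, τ₀ ≫ θ, q_D, hτD, hq_D, hτDq, E'D, S₂, fbarD, pbarD, inrS, σD, aD, bD,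
          hpbD, hinrS, hσDw, hσDr, hJD.flip, haD, hbD⟩
      -- comparison of the two pushouts
      obtain ⟨Q₁, inl₁, inr₁, hQ₁, -⟩ := K.po_exists inrw v₁ hinrw
      obtain ⟨γ, hγl, hγr⟩ : ∃ γ : Q₀ ⟶ Q₁, inl₀ ≫ γ = inlw ≫ inl₁ ∧ inr₀ ≫ γ = inr₁ := by
        have hsq : i₀ ≫ (inlw ≫ inl₁) = μ.F.map pbarC ≫ inr₁ := by
          rw [← Category.assoc, hZw.w, Category.assoc, hQ₁.w, ← Category.assoc, hw₁v]
        exact ⟨hQ₀.desc _ _ hsq, hQ₀.inl_desc _ _ _, hQ₀.inr_desc _ _ _⟩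
      have hγw : K.weq γ := PreJCat.gluing hi₀ hinrw hw₁ hinlw (PreJCat.weq_id _)
        hZw.w (by rw [Category.comp_id, hw₁v]) hQ₀ hQ₁ hγl
        (by rw [hγr, Category.id_comp])
      obtain ⟨ϑ, hϑl, hϑr⟩ : ∃ ϑ : Zw ⟶ μ.F.obj Y, inlw ≫ ϑ = σ₀ ≫ μ.F.map bC ∧
          inrw ≫ ϑ = v₁ ≫ μ.F.map aC := by
        have hsq : i₀ ≫ (σ₀ ≫ μ.F.map bC) = w₁ ≫ (v₁ ≫ μ.F.map aC) := by
          rw [← Category.assoc, hfac₀, ← CategoryTheory.Functor.map_comp, ← hpoC.w, CategoryTheory.Functor.map_comp,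
            ← hw₁v, Category.assoc]
        exact ⟨hZw.desc _ _ hsq, hZw.inl_desc _ _ _, hZw.inr_desc _ _ _⟩
      obtain ⟨κ, hκl, hκr⟩ : ∃ κ : Q₁ ⟶ μ.F.obj Y, inl₁ ≫ κ = ϑ ∧
          inr₁ ≫ κ = μ.F.map aC :=
        ⟨hQ₁.desc _ _ hϑr, hQ₁.inl_desc _ _ _, hQ₁.inr_desc _ _ _⟩
      have hγκ : γ ≫ κ = w₀ := by
        apply hQ₀.hom_ext
        · rw [← Category.assoc, hγl, Category.assoc, hκl, hϑl, hw₀l]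
        · rw [← Category.assoc, hγr, hκr, hw₀r]
      have hκw : K.weq κ := K.weq_of_comp_right hγw (by rw [hγκ]; exact hw₀)
      -- apex pushout
      obtain ⟨Pa, inla, inra, hPa, -⟩ := K.po_exists iZ pbN hiZ
      obtain ⟨δ₁, hδ₁l, hδ₁r⟩ : ∃ δ₁ : Pa ⟶ Q₁, inla ≫ δ₁ = ξ₁ ≫ inl₁ ∧
          inra ≫ δ₁ = m₁ ≫ inr₁ := by
        have hsq : iZ ≫ (ξ₁ ≫ inl₁) = pbN ≫ (m₁ ≫ inr₁) := by
          rw [← Category.assoc, hfacZh, Category.assoc, hQ₁.w, ← Category.assoc, hφ₁v,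
            Category.assoc]
        exact ⟨hPa.desc _ _ hsq, hPa.inl_desc _ _ _, hPa.inr_desc _ _ _⟩
      have hδ₁w : K.weq δ₁ := PreJCat.gluing hiZ hinrw hφ₁w hξ₁ hm₁ hfacZh hφ₁v.symm
        hPa hQ₁ hδ₁l hδ₁r
      obtain ⟨δ₂, hδ₂l, hδ₂r⟩ : ∃ δ₂ : Pa ⟶ JD, inla ≫ δ₂ = inlS ≫ bD ∧
          inra ≫ δ₂ = m₂ ≫ aD := by
        have hsq : iZ ≫ (inlS ≫ bD) = pbN ≫ (m₂ ≫ aD) := by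
          rw [← Category.assoc, hS₂.w, Category.assoc, hJD.w, ← Category.assoc, hφ₂p,
            Category.assoc]
        exact ⟨hPa.desc _ _ hsq, hPa.inl_desc _ _ _, hPa.inr_desc _ _ _⟩
      have hδ₂w : K.weq δ₂ := PreJCat.gluing hiZ hinrS hφ₂w hinlS hm₂ hS₂.w hφ₂p.symm
        hPa hJD hδ₂l hδ₂r
      refine ⟨JD, jD, hIter''.succ hJoin, Pa, δ₁ ≫ κ, δ₂, K.weq_comp hδ₁w hκw, hδ₂w, ?_⟩
      have hϑj : ϑ ≫ μ.F.map h' = χ₁ ≫ q₁ := by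
        apply hZw.hom_ext
        · rw [reassoc_of% hϑl, reassoc_of% hχl, ← CategoryTheory.Functor.map_comp, hbC, CategoryTheory.Functor.map_comp,
            ← hfac₁]
        · rw [reassoc_of% hϑr, reassoc_of% hχr, ← CategoryTheory.Functor.map_comp, haC, hPt₁.w]
      apply hPa.hom_ext
      · simp only [Category.assoc]
        rw [reassoc_of% hδ₁l, reassoc_of% hκl, reassoc_of% hϑj, reassoc_of% hδ₂l, hbD,
          reassoc_of% hσDl, hfacD]
      · simp only [Category.assoc]
        rw [reassoc_of% hδ₁r, reassoc_of% hκr, ← CategoryTheory.Functor.map_comp_assoc, haC, hcomp,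
          reassoc_of% hδ₂r, haD]

end Transfer

/-- For a pointed modelization functor `μ` between J-categories,
`TC (μ B) ≤ TC B`. -/
theorem TC_map_le {D : Type u'} [Category.{v'} D] [HasZeroObject D]
    [HasZeroMorphisms D]
    (J : JCat C) (K : JCat D)
    (hc : ∀ X : C, J.toPreJCat.CofModel X)
    (hd : ∀ X : D, K.toPreJCat.CofModel X)
    (μ : ModelizationFunctor J.toPreJCat K.toPreJCat)
    (hz : IsZero (μ.F.obj (0 : C)))
    (B : C) :
    K.toPreJCat.TC (μ.F.obj B) ≤ J.toPreJCat.TC B := by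
  refine le_iInf fun F => le_iInf fun τ => le_iInf fun hτ => ?_
  refine le_iInf fun Pd => le_iInf fun p1 => le_iInf fun p2 => le_iInf fun hbp =>
    le_iInf fun Δ => le_iInf fun hΔ => ?_
  refine le_sInf ?_
  rintro n ⟨m, rfl, X, h, hIter, hws⟩
  obtain ⟨hτw, hF⟩ := hτ
  obtain ⟨hΔ1, hΔ2⟩ := hΔ
  have hPdpb := isPullback_of_isBinProd hbp
  obtain ⟨-, Zc, τg, qg, hτg, hqg, hfacg, Ptg, pr1g, pr2g, hPtg, wg, hwg, hwg1, hwg2⟩ :=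
    μ.map_hpb (PreJCat.isHPB_of_isPullback hF hPdpb)
  have hEF : K.toPreJCat.EFibrant Zc := by
    have hzq : (0 : Zc ⟶ (0 : D)) = qg ≫ hz.isoZero.hom := (isZero_zero D).eq_of_tgt _ _
    show K.toPreJCat.fib (0 : Zc ⟶ 0)
    rw [hzq]
    exact K.toPreJCat.fib_comp hqg (PreJCat.fib_iso _)
  obtain ⟨P'', π1, π2, hPpb, -⟩ := K.toPreJCat.pb_exists (0 : Zc ⟶ 0) (0 : Zc ⟶ 0) hEF
  have hbpD : IsBinProd π1 π2 := isBinProd_of_isPullback hPpb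
  obtain ⟨Δ'', hΔ''1, hΔ''2⟩ : ∃ d : Zc ⟶ P'', d ≫ π1 = 𝟙 Zc ∧ d ≫ π2 = 𝟙 Zc := by
    have hsq : (𝟙 Zc) ≫ (0 : Zc ⟶ (0 : D)) = (𝟙 Zc) ≫ 0 := rfl
    exact ⟨hPpb.lift _ _ hsq, hPpb.lift_fst _ _ _, hPpb.lift_snd _ _ _⟩
  obtain ⟨ωc, hωc1, hωc2⟩ : ∃ w : Ptg ⟶ P'', w ≫ π1 = pr1g ∧ w ≫ π2 = pr2g ≫ τg := by
    have hsq : pr1g ≫ (0 : Zc ⟶ (0 : D)) = (pr2g ≫ τg) ≫ 0 := (isZero_zero D).eq_of_tgt _ _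
    exact ⟨hPpb.lift _ _ hsq, hPpb.lift_fst _ _ _, hPpb.lift_snd _ _ _⟩
  have hωcw : K.toPreJCat.weq ωc := PreJCat.cogluing hqg hEF hτg
    (PreJCat.weq_iso hz.isoZero.hom) (PreJCat.weq_id Zc)
    ((isZero_zero D).eq_of_tgt _ _)
    ((isZero_zero D).eq_of_tgt _ _)
    hPtg hPpb (by rw [hωc1, Category.comp_id]) hωc2
  have hωw : K.toPreJCat.weq (wg ≫ ωc) := K.toPreJCat.weq_comp hwg hωcw
  have hbase : μ.F.map Δ ≫ (wg ≫ ωc) = τg ≫ Δ'' := by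
    apply hPpb.hom_ext
    · simp only [Category.assoc]
      rw [hωc1, hwg1, ← CategoryTheory.Functor.map_comp_assoc, hΔ1, CategoryTheory.Functor.map_id, Category.id_comp,
        hΔ''1, Category.comp_id]
    · simp only [Category.assoc]
      rw [hωc2, reassoc_of% hwg2, ← CategoryTheory.Functor.map_comp_assoc, hΔ2, CategoryTheory.Functor.map_id,
        Category.id_comp, hΔ''2, Category.comp_id]
  obtain ⟨X''m, h''m, hIterD, M, m₁, m₂, hm₁, hm₂, hcomp⟩ :=
    iterjoin_transfer hd μ hτg hωw hbase hIter
  have hws1 : K.toPreJCat.HasWeakSection (m₁ ≫ μ.F.map h) := by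
    obtain ⟨Ew, τw, qw, hτw', hqw, hfacw, s, hs⟩ := hws
    obtain ⟨E₂, τ₂, q₂, hτ₂, hq₂, hfac₂⟩ := K.toPreJCat.F_fac (μ.F.map qw)
    refine ⟨E₂, m₁ ≫ μ.F.map τw ≫ τ₂, q₂, ?_, hq₂, ?_, μ.F.map s ≫ τ₂, ?_⟩
    · exact K.toPreJCat.weq_comp hm₁ (K.toPreJCat.weq_comp (μ.map_weq _ hτw') hτ₂)
    · simp only [Category.assoc]
      rw [hfac₂, ← CategoryTheory.Functor.map_comp, hfacw]
    · rw [Category.assoc, hfac₂, ← CategoryTheory.Functor.map_comp, hs, CategoryTheory.Functor.map_id]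
  have hcomp' : (m₁ ≫ μ.F.map h) ≫ (wg ≫ ωc) = m₂ ≫ h''m := by
    rw [Category.assoc]; exact hcomp
  have hwsD : K.toPreJCat.HasWeakSection h''m :=
    PreJCat.hasWeakSection_transfer hm₂ hωw hcomp' hws1 hd
  have step1 : K.toPreJCat.TC (μ.F.obj B) ≤ K.toPreJCat.TCE Zc :=
    iInf_le_of_le Zc (iInf_le_of_le (μ.F.map τ ≫ τg)
      (iInf_le_of_le ⟨K.toPreJCat.weq_comp (μ.map_weq _ hτw) hτg, hEF⟩ le_rfl))
  have step2 : K.toPreJCat.TCE Zc ≤ K.toPreJCat.Gsecat Δ'' :=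
    iInf_le_of_le P'' (iInf_le_of_le π1 (iInf_le_of_le π2 (iInf_le_of_le hbpD
      (iInf_le_of_le Δ'' (iInf_le_of_le ⟨hΔ''1, hΔ''2⟩ le_rfl)))))
  have step3 : K.toPreJCat.Gsecat Δ'' ≤ (m : ℕ∞) :=
    sInf_le ⟨m, rfl, X''m, h''m, hIterD, hwsD⟩
  exact le_trans step1 (le_trans step2 step3)
end

section
/- In a J-category, transitivity of weak liftings holds: given morphisms f : A → B, g : C → B, h : D → B, if f admits a weak lifting along g and g admits a weak lifting along h, then f admits a weak lifting along h. -/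
open CategoryTheory CategoryTheory.Limits ZeroObject

universe v u v' u'

variable (C : Type u) [Category.{v} C] [HasZeroObject C] [HasZeroMorphisms C]

variable {C}

variable (C)

variable {C}

/-- In a J-category, transitivity of weak liftings holds. -/
theorem weakLifting_trans (J : JCat C)
    (hc : ∀ X : C, J.toPreJCat.CofModel X)
    {A B Cc Dd : C} (f : A ⟶ B) (g : Cc ⟶ B) (h : Dd ⟶ B)
    (hfg : J.toPreJCat.WeakLifting f g) (hgh : J.toPreJCat.WeakLifting g h) :
    J.toPreJCat.WeakLifting f h := by
  obtain ⟨E, τ, q, hτ, hq, hτq, s, hs⟩ := hfg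
  obtain ⟨E', τ', q', hτ', hq', hτ'q', t, ht⟩ := hgh
  refine ⟨E', τ', q', hτ', hq', hτ'q', ?_⟩
  -- pull back q' along q
  obtain ⟨P, fb, pb, hPB, hpbfib⟩ := J.pb_exists q' q hq'
  have hw : t ≫ q' = τ ≫ q := by rw [ht, hτq]
  set u : Cc ⟶ P := hPB.lift t τ hw with hu
  have hufb : u ≫ fb = t := hPB.lift_fst t τ hw
  have hupb : u ≫ pb = τ := hPB.lift_snd t τ hw
  -- F-factorize u
  obtain ⟨N, ω, m, hω, hm, hωm⟩ := J.F_fac u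
  have hmpb_weq : J.toPreJCat.weq (m ≫ pb) := by
    apply J.weq_of_comp_right hω
    rw [← Category.assoc, hωm, hupb]
    exact hτ
  have hmpb_fib : J.toPreJCat.fib (m ≫ pb) := J.fib_comp hm hpbfib
  -- pull back the trivial fibration m ≫ pb along s
  obtain ⟨P', fb', pb', hPB', hpb'fib⟩ := J.pb_exists (m ≫ pb) s hmpb_fib
  have hpb'weq : J.toPreJCat.weq pb' := (J.pb_weq hmpb_fib hPB').2 hmpb_weq
  obtain ⟨σ, hσ⟩ := hc A pb' hpb'fib hpb'weq
  refine ⟨σ ≫ fb' ≫ m ≫ fb, ?_⟩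
  have h1 : fb ≫ q' = pb ≫ q := hPB.w
  have h2 : fb' ≫ (m ≫ pb) = pb' ≫ s := hPB'.w
  calc (σ ≫ fb' ≫ m ≫ fb) ≫ q' = σ ≫ fb' ≫ m ≫ (fb ≫ q') := by
        simp [Category.assoc]
    _ = σ ≫ (fb' ≫ (m ≫ pb)) ≫ q := by rw [h1]; simp [Category.assoc]
    _ = σ ≫ (pb' ≫ s) ≫ q := by rw [h2]
    _ = (σ ≫ pb') ≫ (s ≫ q) := by simp [Category.assoc]
    _ = f := by rw [hσ, hs, Category.id_comp]
end

section
/- In a J-category, given a weak pullback D-C-B'-A with morphisms g : D → A, g' : C → B', f : A → B', and any morphism h : X → A, the morphism h admits a weak lifting along g if and only if f∘h admits a weak lifting along g'. -/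
open CategoryTheory CategoryTheory.Limits ZeroObject

universe v u v' u'

variable (C : Type u) [Category.{v} C] [HasZeroObject C] [HasZeroMorphisms C]

variable {C}

variable (C)

variable {C}

/-- Fibrations are stable under pullback (any pullback square). -/
lemma fib_snd_of_isPullback (P : PreJCat C) {E B B' Pt : C} {p : E ⟶ B} {f : B' ⟶ B}
    {fb : Pt ⟶ E} {pb : Pt ⟶ B'} (hp : P.fib p) (h : IsPullback fb pb p f) :
    P.fib pb := by
  obtain ⟨P₀, fb₀, pb₀, h₀, hfib⟩ := P.pb_exists p f hp
  have heq : (h.isoIsPullback _ _ h₀).hom ≫ pb₀ = pb := IsPullback.isoIsPullback_hom_snd _ _ h h₀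
  rw [← heq]
  exact P.fib_comp (P.iso_triv_fib _ inferInstance).1 hfib

/-- If `u` weakly lifts along `g`, then a lifting exists through *any*
F-factorization of `g` (assuming all objects are cofibrant models). -/
lemma weakLifting_transfer (P : PreJCat C) (hc : ∀ X : C, P.CofModel X)
    {A B Cc : C} (u : A ⟶ B) (g : Cc ⟶ B) (hl : P.WeakLifting u g)
    {E₂ : C} (τ₂ : Cc ⟶ E₂) (q₂ : E₂ ⟶ B) (hq₂ : P.fib q₂) (hfac : τ₂ ≫ q₂ = g) :
    ∃ s : A ⟶ E₂, s ≫ q₂ = u := by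
  obtain ⟨E₁, τ₁, q₁, hτ₁, hq₁, hfac₁, s, hs⟩ := hl
  obtain ⟨Pt, fb, pb, hP, hpb⟩ := P.pb_exists q₂ q₁ hq₂
  have hcomm : τ₂ ≫ q₂ = τ₁ ≫ q₁ := by rw [hfac, hfac₁]
  let c : Cc ⟶ Pt := hP.lift τ₂ τ₁ hcomm
  have hcfb : c ≫ fb = τ₂ := hP.lift_fst _ _ _
  have hcpb : c ≫ pb = τ₁ := hP.lift_snd _ _ _
  obtain ⟨P', τ₃, q₃, hτ₃, hq₃, hfac₃⟩ := P.F_fac c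
  have hweq : P.weq (q₃ ≫ pb) := by
    apply P.weq_of_comp_right hτ₃
    rw [← Category.assoc, hfac₃, hcpb]; exact hτ₁
  have hfib : P.fib (q₃ ≫ pb) := P.fib_comp hq₃ hpb
  obtain ⟨r, hr⟩ := hc E₁ (q₃ ≫ pb) hfib hweq
  refine ⟨s ≫ r ≫ q₃ ≫ fb, ?_⟩
  have key : r ≫ q₃ ≫ fb ≫ q₂ = q₁ := by
    rw [hP.w, ← Category.assoc q₃, ← Category.assoc r, hr, Category.id_comp]
  simp only [Category.assoc, key, hs]

/-- In a J-category, given a weak pullback `D-C-B'-A` over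
`f : A ⟶ B'` and any `h : X ⟶ A`, `h` admits a weak lifting along `g` iff
`h ≫ f` admits a weak lifting along `g'`. -/
theorem weakLifting_iff_of_weakPullback (J : JCat C)
    (hc : ∀ X : C, J.toPreJCat.CofModel X)
    {Dd A Cc B' X : C} (g : Dd ⟶ A) (g' : Cc ⟶ B') (f : A ⟶ B')
    (hw : J.toPreJCat.IsWeakPullback g g' f) (h : X ⟶ A) :
    J.toPreJCat.WeakLifting h g ↔ J.toPreJCat.WeakLifting (h ≫ f) g' := by
  set P := J.toPreJCat with hP
  obtain ⟨Xo, τ, q, hτ, hq, hfacq, x, hsq, E', τ', q', hτ', hq', hfacq',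
    Pt, pr1, pr2, hPB, w, hwweq, hw1, hw2⟩ := hw
  have hfibpr2 : P.fib pr2 := fib_snd_of_isPullback P hq' hPB
  have hfacg' : (τ ≫ τ') ≫ q' = g' := by rw [Category.assoc, hfacq', hfacq]
  constructor
  · intro hl
    obtain ⟨s, hs⟩ := weakLifting_transfer P hc h g hl w pr2 hfibpr2 hw2
    exact ⟨E', τ ≫ τ', q', P.weq_comp hτ hτ', hq', hfacg', s ≫ pr1,
      by rw [Category.assoc, hPB.w, ← Category.assoc, hs]⟩
  · intro hl
    obtain ⟨t, ht⟩ := weakLifting_transfer P hc (h ≫ f) g' hl (τ ≫ τ') q' hq' hfacg'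
    exact ⟨Pt, w, pr2, hwweq, hfibpr2, hw2, hPB.lift t h ht, hPB.lift_snd t h ht⟩
end

section
/- In a category satisfying (J1)-(J4), consider morphisms f : A → B, g : C → B, f' : A' → B', g' : C' → B' and b : B → B' such that b∘f admits a weak lifting along f' via a weak equivalence x : A → X_{f'}, and b∘g admits a weak lifting along g' via a weak equivalence y : C → X_{g'}. Let j : A *_B C → B and j' : A' *_{B'} C' → B' be the join morphisms. Then b∘j admits a weak lifting along j'. Moreover, if b, x, and y are weak equivalences, then A *_B C and A' *_{B'} C' are weakly equivalent. -/
open CategoryTheory CategoryTheory.Limits ZeroObject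

universe v u v' u'

variable (C : Type u) [Category.{v} C] [HasZeroObject C] [HasZeroMorphisms C]

variable {C}

variable (C)

variable {C}

namespace PreJCat
set_option linter.unusedSectionVars false

variable {P : PreJCat C}

lemma weq_id' (P : PreJCat C) (X : C) : P.weq (𝟙 X) :=
  (P.iso_triv_fib _ (by infer_instance)).2

lemma weq_of_iso' (P : PreJCat C) {X Y : C} (f : X ⟶ Y) (g : Y ⟶ X)
    (h1 : f ≫ g = 𝟙 X) (h2 : g ≫ f = 𝟙 Y) : P.weq f :=
  (P.iso_triv_fib f ⟨g, h1, h2⟩).2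

lemma cofib_of_isPushout' (P : PreJCat C) {A X Y Q : C} {f : A ⟶ X} {g : A ⟶ Y}
    {inl : X ⟶ Q} {inr : Y ⟶ Q}
    (sq : IsPushout f g inl inr) (hf : P.cofib f) : P.cofib inr := by
  obtain ⟨Q', l, r, sq2, hr⟩ := P.po_exists f g hf
  have h : r ≫ (sq2.isoIsPushout _ _ sq).hom = inr := IsPushout.inr_isoIsPushout_hom (h := sq2) (h' := sq)
  rw [← h]
  exact P.cofib_comp hr (P.iso_triv_cofib _ inferInstance).1

lemma fib_of_isPullback' (P : PreJCat C) {Pt X Y Zc : C} {fst : Pt ⟶ X} {snd : Pt ⟶ Y}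
    {p : X ⟶ Zc} {f : Y ⟶ Zc}
    (sq : IsPullback fst snd p f) (hf : P.fib f) : P.fib fst := by
  obtain ⟨P₂, fb₂, pb₂, sq2, hpb₂⟩ := P.pb_exists f p hf
  have h : (sq.flip.isoIsPullback _ _ sq2).hom ≫ pb₂ = fst := IsPullback.isoIsPullback_hom_snd (h := sq.flip) (h' := sq2)
  rw [← h]
  exact P.fib_comp (P.iso_triv_fib _ inferInstance).1 hpb₂

lemma lift_triv_fib' (P : PreJCat C) (hc : ∀ Xo : C, P.CofModel Xo) {E Y X : C} {p : E ⟶ Y}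
    (hfib : P.fib p) (hweq : P.weq p) (u : X ⟶ Y) : ∃ v : X ⟶ E, v ≫ p = u := by
  obtain ⟨Pt, fb, pb, sq, hpb⟩ := P.pb_exists p u hfib
  obtain ⟨s, hs⟩ := hc X pb hpb ((P.pb_weq hfib sq).2 hweq)
  exact ⟨s ≫ fb, by rw [Category.assoc, sq.w, ← Category.assoc, hs, Category.id_comp]⟩

end PreJCat
/-- In a category satisfying (J1)-(J4): if `b ∘ f` admits a weak
lifting along `f'` via `x` and `b ∘ g` admits a weak lifting along `g'` via `y`,
then `b ∘ j` admits a weak lifting along `j'` for the join morphisms `j, j'`.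
Moreover, if `b`, `x` and `y` are weak equivalences, the join objects are weakly
equivalent. -/
theorem join_weakLifting (P : PreJCat C)
    (hc : ∀ Xo : C, P.CofModel Xo)
    {A Cc B A' Cc' B' : C}
    (f : A ⟶ B) (g : Cc ⟶ B) (f' : A' ⟶ B') (g' : Cc' ⟶ B') (b : B ⟶ B')
    {Xf : C} (τf : A' ⟶ Xf) (qf : Xf ⟶ B') (x : A ⟶ Xf)
    (hτf : P.weq τf) (hqf : P.fib qf) (hff : τf ≫ qf = f') (hx : x ≫ qf = f ≫ b)
    {Xg : C} (τg : Cc' ⟶ Xg) (qg : Xg ⟶ B') (y : Cc ⟶ Xg)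
    (hτg : P.weq τg) (hqg : P.fib qg) (hgg : τg ≫ qg = g') (hy : y ≫ qg = g ≫ b)
    {J₁ J₂ : C} (j : J₁ ⟶ B) (j' : J₂ ⟶ B')
    (hj : P.IsJoin f g j) (hj' : P.IsJoin f' g' j') :
    P.WeakLifting (j ≫ b) j' ∧
      (P.weq b → P.weq x → P.weq y → P.WeaklyEquivObj J₁ J₂) := by
  obtain ⟨E, τ, q, hτ, hq, hτq, E', Z, fbar, pbar, i, σ, a, bz,
    hpb, hi, hσ, hiσ, hpo, haj, hbzj⟩ := hj
  obtain ⟨E₂, τ₂, q₂, hτ₂, hq₂, hτq₂, E₂', Z₂, fbar₂, pbar₂, i₂, σ₂, a₂, bz₂,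
    hpb₂, hi₂, hσ₂, hiσ₂, hpo₂, haj₂, hbzj₂⟩ := hj'
  -- transport the weak lifting of `g ≫ b` to the F-factorization `E₂` of `g'`
  obtain ⟨Wg, uE, uX, sqWg, huX⟩ := P.pb_exists q₂ qg hq₂
  obtain ⟨c₀, hc0E, hc0X⟩ : ∃ c₀ : Cc' ⟶ Wg, c₀ ≫ uE = τ₂ ∧ c₀ ≫ uX = τg :=
    ⟨sqWg.lift τ₂ τg (by rw [hτq₂, hgg]), sqWg.lift_fst _ _ _, sqWg.lift_snd _ _ _⟩
  obtain ⟨Wt, wt, rt, hwt, hrt, hwrt⟩ := P.F_fac c₀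
  have hruXf : P.fib (rt ≫ uX) := P.fib_comp hrt huX
  have hruXw : P.weq (rt ≫ uX) := P.weq_of_comp_right hwt (by
    rw [← Category.assoc, hwrt, hc0X]; exact hτg)
  obtain ⟨yt, hyt⟩ := P.lift_triv_fib' hc hruXf hruXw y
  set y₂ := yt ≫ rt ≫ uE with hy₂
  have hy₂q : y₂ ≫ q₂ = g ≫ b := by
    rw [hy₂]
    calc (yt ≫ rt ≫ uE) ≫ q₂ = yt ≫ rt ≫ (uE ≫ q₂) := by simp only [Category.assoc]
      _ = yt ≫ rt ≫ (uX ≫ qg) := by rw [sqWg.w]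
      _ = (yt ≫ (rt ≫ uX)) ≫ qg := by simp only [Category.assoc]
      _ = y ≫ qg := by rw [hyt]
      _ = g ≫ b := hy
  -- EB := B ×_{B'} E₂
  obtain ⟨EB, eB, pB, sqEB, hpB⟩ := P.pb_exists q₂ b hq₂
  obtain ⟨yEB, hyEBe, hyEBp⟩ : ∃ yEB : Cc ⟶ EB, yEB ≫ eB = y₂ ∧ yEB ≫ pB = g :=
    ⟨sqEB.lift y₂ g hy₂q, sqEB.lift_fst _ _ _, sqEB.lift_snd _ _ _⟩
  -- D := EB ×_B E, and the roof D̃ over E and EB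
  obtain ⟨D, dB, dE, sqD, hdE⟩ := P.pb_exists pB q hpB
  have hdB : P.fib dB := P.fib_of_isPullback' sqD hq
  obtain ⟨cD, hcDB, hcDE⟩ : ∃ cD : Cc ⟶ D, cD ≫ dB = yEB ∧ cD ≫ dE = τ :=
    ⟨sqD.lift yEB τ (by rw [hyEBp, hτq]), sqD.lift_fst _ _ _, sqD.lift_snd _ _ _⟩
  obtain ⟨Dt, w₃, r₃, hw₃, hr₃, hw₃r₃⟩ := P.F_fac cD
  set ρE := r₃ ≫ dE with hρE
  set ρEB := r₃ ≫ dB with hρEB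
  have hρEf : P.fib ρE := P.fib_comp hr₃ hdE
  have hρEw : P.weq ρE := P.weq_of_comp_right hw₃ (by
    rw [hρE, ← Category.assoc, hw₃r₃, hcDE]; exact hτ)
  have hρEBf : P.fib ρEB := P.fib_comp hr₃ hdB
  have hρEBpB : ρEB ≫ pB = ρE ≫ q := by
    rw [hρEB, hρE, Category.assoc, Category.assoc, sqD.w]
  obtain ⟨sD, hsD⟩ := hc E ρE hρEf hρEw
  set e := sD ≫ ρEB ≫ eB with he
  have heq : e ≫ q₂ = q ≫ b := by
    rw [he]
    calc (sD ≫ ρEB ≫ eB) ≫ q₂ = sD ≫ ρEB ≫ (eB ≫ q₂) := by simp only [Category.assoc]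
      _ = sD ≫ ρEB ≫ (pB ≫ b) := by rw [sqEB.w]
      _ = sD ≫ (ρEB ≫ pB) ≫ b := by simp only [Category.assoc]
      _ = sD ≫ (ρE ≫ q) ≫ b := by rw [hρEBpB]
      _ = (sD ≫ ρE) ≫ (q ≫ b) := by simp only [Category.assoc]
      _ = q ≫ b := by rw [hsD, Category.id_comp]
  -- F := Xf ×_{B'} E₂ and the comparison maps m, n
  obtain ⟨Fo, wE, wX, sqF, hwX⟩ := P.pb_exists q₂ qf hq₂
  obtain ⟨m, hmE, hmX⟩ : ∃ m : E₂' ⟶ Fo, m ≫ wE = fbar₂ ∧ m ≫ wX = pbar₂ ≫ τf := by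
    have w : fbar₂ ≫ q₂ = (pbar₂ ≫ τf) ≫ qf := by
      rw [hpb₂.w, Category.assoc, hff]
    exact ⟨sqF.lift fbar₂ (pbar₂ ≫ τf) w, sqF.lift_fst _ _ _, sqF.lift_snd _ _ _⟩
  have hm : P.weq m := by
    have hbig : IsPullback (m ≫ wE) pbar₂ q₂ (τf ≫ qf) := by
      rw [hmE, hff]; exact hpb₂
    have sqm : IsPullback m pbar₂ wX τf := IsPullback.of_right hbig hmX sqF
    exact (P.pb_weq hwX sqm).1 hτf
  obtain ⟨n, hnE, hnX⟩ : ∃ n : E' ⟶ Fo, n ≫ wE = fbar ≫ e ∧ n ≫ wX = pbar ≫ x := by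
    have w : (fbar ≫ e) ≫ q₂ = (pbar ≫ x) ≫ qf := by
      calc (fbar ≫ e) ≫ q₂ = fbar ≫ (e ≫ q₂) := by simp only [Category.assoc]
        _ = (fbar ≫ q) ≫ b := by rw [heq]; simp only [Category.assoc]
        _ = (pbar ≫ f) ≫ b := by rw [hpb.w]
        _ = pbar ≫ (x ≫ qf) := by rw [hx]; simp only [Category.assoc]
        _ = (pbar ≫ x) ≫ qf := by simp only [Category.assoc]
    exact ⟨sqF.lift (fbar ≫ e) (pbar ≫ x) w, sqF.lift_fst _ _ _, sqF.lift_snd _ _ _⟩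
  -- V := Z ⊔_{E'} F
  obtain ⟨V, zV, tV, sqV, htV⟩ := P.po_exists i n hi
  obtain ⟨sV, hsVz, hsVt⟩ : ∃ sV : V ⟶ E₂, zV ≫ sV = σ ≫ e ∧ tV ≫ sV = wE := by
    have w : i ≫ (σ ≫ e) = n ≫ wE := by
      rw [← Category.assoc, hiσ, hnE]
    exact ⟨sqV.desc (σ ≫ e) wE w, sqV.inl_desc _ _ _, sqV.inr_desc _ _ _⟩
  -- W₁ := Z₂ ⊔_{E₂'} F
  obtain ⟨W₁, z₁, tF, sqW₁, htF⟩ := P.po_exists i₂ m hi₂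
  have hz₁ : P.weq z₁ := (P.po_weq hi₂ sqW₁).1 hm
  obtain ⟨sW₁, h1z, h1t⟩ : ∃ sW₁ : W₁ ⟶ E₂, z₁ ≫ sW₁ = σ₂ ∧ tF ≫ sW₁ = wE := by
    have w : i₂ ≫ σ₂ = m ≫ wE := by rw [hiσ₂, hmE]
    exact ⟨sqW₁.desc σ₂ wE w, sqW₁.inl_desc _ _ _, sqW₁.inr_desc _ _ _⟩
  have hsW₁ : P.weq sW₁ := P.weq_of_comp_right hz₁ (by rw [h1z]; exact hσ₂)
  -- W₂ := Z₂ ⊔_{E₂'} V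
  obtain ⟨W₂, z₂, ρV, sqR, hρV⟩ := P.po_exists i₂ (m ≫ tV) hi₂
  obtain ⟨t₂, h2z, h2t⟩ : ∃ t₂ : W₁ ⟶ W₂, z₁ ≫ t₂ = z₂ ∧ tF ≫ t₂ = tV ≫ ρV := by
    have w : i₂ ≫ z₂ = m ≫ (tV ≫ ρV) := by rw [sqR.w, Category.assoc]
    exact ⟨sqW₁.desc z₂ (tV ≫ ρV) w, sqW₁.inl_desc _ _ _, sqW₁.inr_desc _ _ _⟩
  obtain ⟨sW₂, hRz, hRv⟩ : ∃ sW₂ : W₂ ⟶ E₂, z₂ ≫ sW₂ = σ₂ ∧ ρV ≫ sW₂ = sV := by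
    have w : i₂ ≫ σ₂ = (m ≫ tV) ≫ sV := by
      rw [hiσ₂, Category.assoc, hsVt, hmE]
    exact ⟨sqR.desc σ₂ sV w, sqR.inl_desc _ _ _, sqR.inr_desc _ _ _⟩
  have ht2s : t₂ ≫ sW₂ = sW₁ := by
    apply sqW₁.hom_ext
    · rw [← Category.assoc, h2z, hRz, h1z]
    · rw [← Category.assoc, h2t, Category.assoc, hRv, hsVt, h1t]
  -- Qsq : W₂ is also V ⊔_F W₁
  have sqQbig : IsPushout i₂ (m ≫ tV) (z₁ ≫ t₂) ρV := by rw [h2z]; exact sqR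
  have sqQ : IsPushout tF tV t₂ ρV := IsPushout.of_top sqQbig h2t sqW₁
  have ht₂c : P.cofib t₂ := P.cofib_of_isPushout' sqQ.flip htV
  -- C-factorize sW₂
  obtain ⟨W, cW, sw, hcWc, hsw, hcsw⟩ := P.C_fac sW₂
  set w₁ := t₂ ≫ cW with hw₁
  have hw₁c : P.cofib w₁ := P.cofib_comp ht₂c hcWc
  have hw₁w : P.weq w₁ := P.weq_of_comp_left hsw (by
    rw [hw₁, Category.assoc, hcsw, ht2s]; exact hsW₁)
  set vW := ρV ≫ cW with hvW
  have hvWc : P.cofib vW := P.cofib_comp hρV hcWc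
  -- cofibrancy of the pushout legs a, a₂
  have ha : P.cofib a := P.cofib_of_isPushout' hpo.flip hi
  have ha₂ : P.cofib a₂ := P.cofib_of_isPushout' hpo₂.flip hi₂
  -- L₀ := J₁ ⊔_A Xf
  obtain ⟨L₀, lam, xL, sqL, hxL⟩ := P.po_exists a x ha
  obtain ⟨th, hthz, htht⟩ : ∃ th : V ⟶ L₀, zV ≫ th = bz ≫ lam ∧ tV ≫ th = wX ≫ xL := by
    have w : i ≫ (bz ≫ lam) = n ≫ (wX ≫ xL) := by
      calc i ≫ (bz ≫ lam) = (i ≫ bz) ≫ lam := by simp only [Category.assoc]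
        _ = (pbar ≫ a) ≫ lam := by rw [hpo.w]
        _ = pbar ≫ (x ≫ xL) := by rw [Category.assoc, sqL.w]
        _ = (pbar ≫ x) ≫ xL := by simp only [Category.assoc]
        _ = n ≫ (wX ≫ xL) := by rw [← hnX, Category.assoc]
    exact ⟨sqV.desc (bz ≫ lam) (wX ≫ xL) w, sqV.inl_desc _ _ _, sqV.inr_desc _ _ _⟩
  -- K₂ := L₀ ⊔_V W
  obtain ⟨K₂, gW₂, l, sqT, hl⟩ := P.po_exists vW th hvWc
  -- K₀ := J₂ ⊔_{A'} Xf
  obtain ⟨K₀, μ₀, xK, sqK₀, hxK⟩ := P.po_exists a₂ τf ha₂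
  have hμ₀ : P.weq μ₀ := (P.po_weq ha₂ sqK₀).1 hτf
  obtain ⟨gW₁, hgz, hgt⟩ : ∃ gW₁ : W₁ ⟶ K₀, z₁ ≫ gW₁ = bz₂ ≫ μ₀ ∧ tF ≫ gW₁ = wX ≫ xK := by
    have w : i₂ ≫ (bz₂ ≫ μ₀) = m ≫ (wX ≫ xK) := by
      calc i₂ ≫ (bz₂ ≫ μ₀) = (i₂ ≫ bz₂) ≫ μ₀ := by simp only [Category.assoc]
        _ = (pbar₂ ≫ a₂) ≫ μ₀ := by rw [hpo₂.w]
        _ = pbar₂ ≫ (τf ≫ xK) := by rw [Category.assoc, sqK₀.w]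
        _ = (pbar₂ ≫ τf) ≫ xK := by simp only [Category.assoc]
        _ = m ≫ (wX ≫ xK) := by rw [← hmX, Category.assoc]
    exact ⟨sqW₁.desc (bz₂ ≫ μ₀) (wX ≫ xK) w, sqW₁.inl_desc _ _ _, sqW₁.inr_desc _ _ _⟩
  -- the weak equivalence μs : J₂ ⟶ K₂
  obtain ⟨μs, hμsa, hμsb⟩ : ∃ μs : J₂ ⟶ K₂,
      a₂ ≫ μs = τf ≫ (xL ≫ l) ∧ bz₂ ≫ μs = z₂ ≫ (cW ≫ gW₂) := by
    have w : pbar₂ ≫ (τf ≫ (xL ≫ l)) = i₂ ≫ (z₂ ≫ (cW ≫ gW₂)) := by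
      rw [← reassoc_of% hmX, ← reassoc_of% htht, ← sqT.w, hvW]
      simp only [Category.assoc]
      rw [← reassoc_of% sqR.w]
    exact ⟨hpo₂.desc (τf ≫ (xL ≫ l)) (z₂ ≫ (cW ≫ gW₂)) w,
      hpo₂.inl_desc _ _ _, hpo₂.inr_desc _ _ _⟩
  obtain ⟨k₂, hk2μ, hk2x⟩ : ∃ k₂ : K₀ ⟶ K₂, μ₀ ≫ k₂ = μs ∧ xK ≫ k₂ = xL ≫ l :=
    ⟨sqK₀.desc μs (xL ≫ l) hμsa, sqK₀.inl_desc _ _ _, sqK₀.inr_desc _ _ _⟩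
  -- the pushout square sqM : IsPushout w₁ gW₁ gW₂ k₂, by paste/cancel
  have sqB : IsPushout (pbar₂ ≫ τf) i₂ xK (bz₂ ≫ μ₀) := hpo₂.paste_horiz sqK₀.flip
  have sqB' : IsPushout i₂ (m ≫ wX) (z₁ ≫ gW₁) xK := by
    have hB := sqB.flip
    rw [← hmX, ← hgz] at hB
    exact hB
  have sqC : IsPushout tF wX gW₁ xK := IsPushout.of_top sqB' hgt sqW₁
  have sqPL : IsPushout (pbar ≫ x) i xL (bz ≫ lam) := hpo.paste_horiz sqL.flip
  have sqPL' : IsPushout i (n ≫ wX) (zV ≫ th) xL := by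
    have hB := sqPL.flip
    rw [← hnX, ← hthz] at hB
    exact hB
  have sqG : IsPushout tV wX th xL := IsPushout.of_top sqPL' htht sqV
  have sqD0 : IsPushout (tV ≫ vW) wX gW₂ (xL ≫ l) := sqG.paste_horiz sqT
  have htw : tF ≫ w₁ = tV ≫ vW := by
    rw [hw₁, hvW, ← Category.assoc, h2t, Category.assoc]
  have sqD' : IsPushout (tF ≫ w₁) wX gW₂ (xK ≫ k₂) := by
    rw [htw, hk2x]; exact sqD0
  have hMcomm : w₁ ≫ gW₂ = gW₁ ≫ k₂ := by
    apply sqW₁.hom_ext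
    · calc z₁ ≫ (w₁ ≫ gW₂) = ((z₁ ≫ t₂) ≫ cW) ≫ gW₂ := by
            rw [hw₁]; simp only [Category.assoc]
        _ = z₂ ≫ (cW ≫ gW₂) := by rw [h2z]; simp only [Category.assoc]
        _ = bz₂ ≫ μs := by rw [hμsb]
        _ = bz₂ ≫ (μ₀ ≫ k₂) := by rw [hk2μ]
        _ = z₁ ≫ (gW₁ ≫ k₂) := by rw [← Category.assoc, ← hgz]; simp only [Category.assoc]
    · calc tF ≫ (w₁ ≫ gW₂) = (tF ≫ w₁) ≫ gW₂ := by simp only [Category.assoc]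
        _ = tV ≫ (vW ≫ gW₂) := by rw [htw]; simp only [Category.assoc]
        _ = (tV ≫ th) ≫ l := by rw [sqT.w]; simp only [Category.assoc]
        _ = wX ≫ (xL ≫ l) := by rw [htht]; simp only [Category.assoc]
        _ = wX ≫ (xK ≫ k₂) := by rw [hk2x]
        _ = tF ≫ (gW₁ ≫ k₂) := by rw [← Category.assoc, ← hgt]; simp only [Category.assoc]
  have sqM : IsPushout w₁ gW₁ gW₂ k₂ := IsPushout.of_left sqD' hMcomm sqC
  have hk₂w : P.weq k₂ := (P.po_weq hw₁c sqM).2 hw₁w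
  have hμsw : P.weq μs := by rw [← hk2μ]; exact P.weq_comp hμ₀ hk₂w
  -- the map ν : K₂ ⟶ B'
  obtain ⟨nuL, hnuLl, hnuLx⟩ : ∃ nuL : L₀ ⟶ B', lam ≫ nuL = j ≫ b ∧ xL ≫ nuL = qf := by
    have w : a ≫ (j ≫ b) = x ≫ qf := by
      rw [← Category.assoc, haj, hx]
    exact ⟨sqL.desc (j ≫ b) qf w, sqL.inl_desc _ _ _, sqL.inr_desc _ _ _⟩
  have hνT : vW ≫ (sw ≫ q₂) = th ≫ nuL := by
    apply sqV.hom_ext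
    · rw [hvW]
      simp only [Category.assoc]
      rw [reassoc_of% hcsw, reassoc_of% hRv, reassoc_of% hsVz, heq,
        reassoc_of% hthz, hnuLl, reassoc_of% hbzj]
    · rw [hvW]
      simp only [Category.assoc]
      rw [reassoc_of% hcsw, reassoc_of% hRv, reassoc_of% hsVt, sqF.w,
        reassoc_of% htht, hnuLx]
  obtain ⟨nu, hnuW, hnul⟩ : ∃ nu : K₂ ⟶ B', gW₂ ≫ nu = sw ≫ q₂ ∧ l ≫ nu = nuL :=
    ⟨sqT.desc (sw ≫ q₂) nuL hνT, sqT.inl_desc _ _ _, sqT.inr_desc _ _ _⟩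
  have hμsnu : μs ≫ nu = j' := by
    apply hpo₂.hom_ext
    · calc a₂ ≫ (μs ≫ nu) = (τf ≫ (xL ≫ l)) ≫ nu := by
            rw [← Category.assoc, hμsa]
        _ = τf ≫ (xL ≫ (l ≫ nu)) := by simp only [Category.assoc]
        _ = τf ≫ qf := by rw [hnul, hnuLx]
        _ = a₂ ≫ j' := by rw [hff, haj₂]
    · calc bz₂ ≫ (μs ≫ nu) = (z₂ ≫ (cW ≫ gW₂)) ≫ nu := by
            rw [← Category.assoc, hμsb]
        _ = z₂ ≫ (cW ≫ (gW₂ ≫ nu)) := by simp only [Category.assoc]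
        _ = (z₂ ≫ (cW ≫ sw)) ≫ q₂ := by rw [hnuW]; simp only [Category.assoc]
        _ = (z₂ ≫ sW₂) ≫ q₂ := by rw [hcsw]
        _ = σ₂ ≫ q₂ := by rw [hRz]
        _ = bz₂ ≫ j' := by rw [hbzj₂]
  have hlnu : (lam ≫ l) ≫ nu = j ≫ b := by
    rw [Category.assoc, hnul, hnuLl]
  -- F-factorize ν and conclude part 1
  obtain ⟨Eb, wb, qJ, hwb, hqJ, hwbqJ⟩ := P.F_fac nu
  constructor
  · exact ⟨Eb, μs ≫ wb, qJ, P.weq_comp hμsw hwb, hqJ,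
      by rw [Category.assoc, hwbqJ]; exact hμsnu,
      ⟨(lam ≫ l) ≫ wb, by rw [Category.assoc, hwbqJ]; exact hlnu⟩⟩
  -- part 2
  intro hbw hxw hyw
  have hsDw : P.weq sD := P.weq_of_comp_left hρEw (by rw [hsD]; exact P.weq_id' E)
  have heBw : P.weq eB := (P.pb_weq hq₂ sqEB).1 hbw
  have hruEw : P.weq (rt ≫ uE) := P.weq_of_comp_right hwt (by
    rw [← Category.assoc, hwrt, hc0E]; exact hτ₂)
  have hytw : P.weq yt := P.weq_of_comp_left hruXw (by rw [hyt]; exact hyw)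
  have hy₂w : P.weq y₂ := by
    have h : y₂ = yt ≫ (rt ≫ uE) := by rw [hy₂]
    rw [h]; exact P.weq_comp hytw hruEw
  have hyEBw : P.weq yEB := P.weq_of_comp_left heBw (by rw [hyEBe]; exact hy₂w)
  have hρEBw : P.weq ρEB := P.weq_of_comp_right hw₃ (by
    rw [hρEB, ← Category.assoc, hw₃r₃, hcDB]; exact hyEBw)
  have hew : P.weq e := by
    rw [he]; exact P.weq_comp hsDw (P.weq_comp hρEBw heBw)
  -- auxiliary pullbacks G₁, G₀, PD
  obtain ⟨G₁, g1E, g1A, sqG₁, hg1A⟩ := P.pb_exists q₂ (f ≫ b) hq₂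
  obtain ⟨G₀, g0B, g0A, sqG₀, hg0A⟩ := P.pb_exists pB f hpB
  obtain ⟨PD, pD, pA, sqPD, hpA⟩ := P.pb_exists (ρE ≫ q) f (P.fib_comp hρEf hq)
  obtain ⟨u₁, hu1f, hu1p⟩ : ∃ u₁ : PD ⟶ E', u₁ ≫ fbar = pD ≫ ρE ∧ u₁ ≫ pbar = pA := by
    have w : (pD ≫ ρE) ≫ q = pA ≫ f := by rw [Category.assoc, sqPD.w]
    exact ⟨hpb.lift (pD ≫ ρE) pA w, hpb.lift_fst _ _ _, hpb.lift_snd _ _ _⟩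
  have sqT₁ : IsPullback pD u₁ ρE fbar :=
    IsPullback.of_bot (by rw [hu1p]; exact sqPD) hu1f.symm hpb
  have hu₁w : P.weq u₁ := (P.pb_weq hρEf sqT₁).2 hρEw
  obtain ⟨u₀, hu0B, hu0A⟩ : ∃ u₀ : PD ⟶ G₀, u₀ ≫ g0B = pD ≫ ρEB ∧ u₀ ≫ g0A = pA := by
    have w : (pD ≫ ρEB) ≫ pB = pA ≫ f := by
      rw [Category.assoc, hρEBpB, ← Category.assoc, Category.assoc, sqPD.w]
    exact ⟨sqG₀.lift (pD ≫ ρEB) pA w, sqG₀.lift_fst _ _ _, sqG₀.lift_snd _ _ _⟩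
  have sqT₀ : IsPullback pD u₀ ρEB g0B :=
    IsPullback.of_bot (by rw [hu0A, hρEBpB]; exact sqPD) hu0B.symm sqG₀
  have hu₀w : P.weq u₀ := (P.pb_weq hρEBf sqT₀).2 hρEBw
  obtain ⟨vs, hvsD, hvsA⟩ : ∃ vs : E' ⟶ PD, vs ≫ pD = fbar ≫ sD ∧ vs ≫ pA = pbar := by
    have w : (fbar ≫ sD) ≫ (ρE ≫ q) = pbar ≫ f := by
      calc (fbar ≫ sD) ≫ (ρE ≫ q) = (fbar ≫ (sD ≫ ρE)) ≫ q := by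
            simp only [Category.assoc]
        _ = fbar ≫ q := by rw [hsD, Category.comp_id]
        _ = pbar ≫ f := hpb.w
    exact ⟨sqPD.lift (fbar ≫ sD) pbar w, sqPD.lift_fst _ _ _, sqPD.lift_snd _ _ _⟩
  have hvsu : vs ≫ u₁ = 𝟙 E' := by
    apply hpb.hom_ext
    · calc (vs ≫ u₁) ≫ fbar = vs ≫ (pD ≫ ρE) := by rw [Category.assoc, hu1f]
        _ = (fbar ≫ sD) ≫ ρE := by rw [← Category.assoc, hvsD]
        _ = fbar := by rw [Category.assoc, hsD, Category.comp_id]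
        _ = 𝟙 E' ≫ fbar := by rw [Category.id_comp]
    · calc (vs ≫ u₁) ≫ pbar = vs ≫ pA := by rw [Category.assoc, hu1p]
        _ = pbar := hvsA
        _ = 𝟙 E' ≫ pbar := by rw [Category.id_comp]
  have hvsw : P.weq vs := P.weq_of_comp_left hu₁w (by rw [hvsu]; exact P.weq_id' E')
  -- the iso ι : G₀ ≅ G₁
  obtain ⟨g1B, hg1Be, hg1Bp⟩ : ∃ g1B : G₁ ⟶ EB, g1B ≫ eB = g1E ∧ g1B ≫ pB = g1A ≫ f := by
    have w : g1E ≫ q₂ = (g1A ≫ f) ≫ b := by rw [sqG₁.w]; simp only [Category.assoc]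
    exact ⟨sqEB.lift g1E (g1A ≫ f) w, sqEB.lift_fst _ _ _, sqEB.lift_snd _ _ _⟩
  obtain ⟨io, hioE, hioA⟩ : ∃ io : G₀ ⟶ G₁, io ≫ g1E = g0B ≫ eB ∧ io ≫ g1A = g0A := by
    have w : (g0B ≫ eB) ≫ q₂ = g0A ≫ (f ≫ b) := by
      calc (g0B ≫ eB) ≫ q₂ = g0B ≫ (pB ≫ b) := by rw [Category.assoc, sqEB.w]
        _ = (g0B ≫ pB) ≫ b := by simp only [Category.assoc]
        _ = (g0A ≫ f) ≫ b := by rw [sqG₀.w]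
        _ = g0A ≫ (f ≫ b) := by simp only [Category.assoc]
    exact ⟨sqG₁.lift (g0B ≫ eB) g0A w, sqG₁.lift_fst _ _ _, sqG₁.lift_snd _ _ _⟩
  obtain ⟨io', hio'B, hio'A⟩ : ∃ io' : G₁ ⟶ G₀, io' ≫ g0B = g1B ∧ io' ≫ g0A = g1A :=
    ⟨sqG₀.lift g1B g1A hg1Bp, sqG₀.lift_fst _ _ _, sqG₀.lift_snd _ _ _⟩
  have hiog1B : io ≫ g1B = g0B := by
    apply sqEB.hom_ext
    · rw [Category.assoc, hg1Be, hioE]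
    · calc (io ≫ g1B) ≫ pB = io ≫ (g1A ≫ f) := by rw [Category.assoc, hg1Bp]
        _ = (io ≫ g1A) ≫ f := by simp only [Category.assoc]
        _ = g0A ≫ f := by rw [hioA]
        _ = g0B ≫ pB := by rw [← sqG₀.w]
  have hii' : io ≫ io' = 𝟙 G₀ := by
    apply sqG₀.hom_ext
    · rw [Category.assoc, hio'B, hiog1B, Category.id_comp]
    · rw [Category.assoc, hio'A, hioA, Category.id_comp]
  have hi'i : io' ≫ io = 𝟙 G₁ := by
    apply sqG₁.hom_ext
    · calc (io' ≫ io) ≫ g1E = io' ≫ (g0B ≫ eB) := by rw [Category.assoc, hioE]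
        _ = (io' ≫ g0B) ≫ eB := by simp only [Category.assoc]
        _ = g1E := by rw [hio'B, hg1Be]
        _ = 𝟙 G₁ ≫ g1E := by rw [Category.id_comp]
    · rw [Category.assoc, hioA, hio'A, Category.id_comp]
  have hiow : P.weq io := P.weq_of_iso' io io' hii' hi'i
  -- the comparisons n₁, n₂ and weq n
  obtain ⟨n₁, hn1E, hn1A⟩ : ∃ n₁ : E' ⟶ G₁, n₁ ≫ g1E = fbar ≫ e ∧ n₁ ≫ g1A = pbar := by
    have w : (fbar ≫ e) ≫ q₂ = pbar ≫ (f ≫ b) := by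
      calc (fbar ≫ e) ≫ q₂ = fbar ≫ (e ≫ q₂) := by simp only [Category.assoc]
        _ = (fbar ≫ q) ≫ b := by rw [heq]; simp only [Category.assoc]
        _ = (pbar ≫ f) ≫ b := by rw [hpb.w]
        _ = pbar ≫ (f ≫ b) := by simp only [Category.assoc]
    exact ⟨sqG₁.lift (fbar ≫ e) pbar w, sqG₁.lift_fst _ _ _, sqG₁.lift_snd _ _ _⟩
  obtain ⟨n₂, hn2E, hn2X⟩ : ∃ n₂ : G₁ ⟶ Fo, n₂ ≫ wE = g1E ∧ n₂ ≫ wX = g1A ≫ x := by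
    have w : g1E ≫ q₂ = (g1A ≫ x) ≫ qf := by
      rw [sqG₁.w, ← hx]; simp only [Category.assoc]
    exact ⟨sqF.lift g1E (g1A ≫ x) w, sqF.lift_fst _ _ _, sqF.lift_snd _ _ _⟩
  have hn2w : P.weq n₂ := by
    have hbig : IsPullback (n₂ ≫ wE) g1A q₂ (x ≫ qf) := by
      rw [hn2E, hx]; exact sqG₁
    have sqN₂ : IsPullback n₂ g1A wX x := IsPullback.of_right hbig hn2X sqF
    exact (P.pb_weq hwX sqN₂).1 hxw
  have hn1eq : n₁ = vs ≫ (u₀ ≫ io) := by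
    apply sqG₁.hom_ext
    · calc n₁ ≫ g1E = fbar ≫ e := hn1E
        _ = (fbar ≫ sD) ≫ (ρEB ≫ eB) := by rw [he]; simp only [Category.assoc]
        _ = vs ≫ (pD ≫ (ρEB ≫ eB)) := by rw [← hvsD]; simp only [Category.assoc]
        _ = vs ≫ ((u₀ ≫ g0B) ≫ eB) := by rw [hu0B]; simp only [Category.assoc]
        _ = vs ≫ (u₀ ≫ (io ≫ g1E)) := by rw [hioE]; simp only [Category.assoc]
        _ = (vs ≫ (u₀ ≫ io)) ≫ g1E := by simp only [Category.assoc]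
    · calc n₁ ≫ g1A = pbar := hn1A
        _ = vs ≫ pA := by rw [hvsA]
        _ = vs ≫ (u₀ ≫ g0A) := by rw [hu0A]
        _ = (vs ≫ (u₀ ≫ io)) ≫ g1A := by rw [← hioA]; simp only [Category.assoc]
  have hn1w : P.weq n₁ := by
    rw [hn1eq]; exact P.weq_comp hvsw (P.weq_comp hu₀w hiow)
  have hneq : n = n₁ ≫ n₂ := by
    apply sqF.hom_ext
    · rw [hnE, Category.assoc, hn2E, hn1E]
    · calc n ≫ wX = pbar ≫ x := hnX
        _ = (n₁ ≫ g1A) ≫ x := by rw [hn1A]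
        _ = n₁ ≫ (g1A ≫ x) := by simp only [Category.assoc]
        _ = (n₁ ≫ n₂) ≫ wX := by rw [← hn2X]; simp only [Category.assoc]
  have hnw : P.weq n := by rw [hneq]; exact P.weq_comp hn1w hn2w
  -- weak equivalences of the comparison maps into K₂
  have hzVw : P.weq zV := (P.po_weq hi sqV).1 hnw
  have hsVw : P.weq sV := P.weq_of_comp_right hzVw (by
    rw [hsVz]; exact P.weq_comp hσ hew)
  have hvWsw : vW ≫ sw = sV := by
    rw [hvW, Category.assoc, hcsw, hRv]
  have hvWw : P.weq vW := P.weq_of_comp_left hsw (by rw [hvWsw]; exact hsVw)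
  have hlw : P.weq l := (P.po_weq hvWc sqT).2 hvWw
  have hlamw : P.weq lam := (P.po_weq ha sqL).1 hxw
  exact Relation.EqvGen.trans _ _ _
    (Relation.EqvGen.trans _ _ _
      (Relation.EqvGen.rel _ _ ⟨lam, hlamw⟩)
      (Relation.EqvGen.rel _ _ ⟨l, hlw⟩))
    (Relation.EqvGen.symm _ _ (Relation.EqvGen.rel _ _ ⟨μs, hμsw⟩))
end
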